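/- arXiv:2406.07993 — 5 statements merged into one kernel-verified Lean document; each statement's English description precedes it below -/
import Mathlib

section
/- In the ARLOD model, consensus is stable: if there exists a time t0 such that Q^i_o(t0) > Q^i_{-o}(t0) for some opinion o ∈ {-1,1} and every agent i ∈ {1,...,N}, then almost surely Q^i_o(t) > Q^i_{-o}(t) for every agent i and every time t ≥ t0. -/
open MeasureTheory ProbabilityTheory

noncomputable section

/-- The preferred opinion of an agent with Q-values `q : Bool → ℝ` (`true` encodes
opinion `1`, `false` encodes opinion `-1`): the opinion with the larger Q-value
(opinion `1` in case of a tie). -/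
def prefOf (q : Bool → ℝ) : Bool := if q false ≤ q true then true else false

/-- One round of the ARLOD model: agent `i` is selected and expresses an opinion to the
selected neighbour `j` (its preferred opinion if the exploration flag `e` is `false`,
the other opinion if `e` is `true`); `j` responds honestly with reward `1` if the
expressed opinion is `j`'s preferred opinion and `-1` otherwise, and `i` updates the
Q-value of the expressed opinion by `Q ← (1−α)Q + αR`.  (If the sampled pair `(i,j)` is
not an edge of `G` — an event of probability zero — nothing happens.) -/
def arlodStep {N : ℕ} (G : SimpleGraph (Fin N)) [DecidableRel G.Adj] (α : ℝ)
    (q : Fin N → Bool → ℝ) (i j : Fin N) (e : Bool) : Fin N → Bool → ℝ :=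
  if G.Adj i j then
    let expressed : Bool := if e then !(prefOf (q i)) else prefOf (q i)
    let R : ℝ := if expressed = prefOf (q j) then 1 else -1
    fun v o => if v = i ∧ o = expressed then (1 - α) * q i expressed + α * R else q v o
  else q


lemma prefOf_eq {q : Bool → ℝ} {o : Bool} (h : q (!o) < q o) : prefOf q = o := by
  cases o with
  | true => simp only [Bool.not_true] at h; simp [prefOf, h.le]
  | false => simp only [Bool.not_false] at h; simp [prefOf, h.not_ge]

lemma step_bounds {N : ℕ} (G : SimpleGraph (Fin N)) [DecidableRel G.Adj] {α : ℝ}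
    (hα : α ∈ Set.Ioo (0 : ℝ) 1) {q : Fin N → Bool → ℝ}
    (hb : ∀ v o', q v o' ∈ Set.Icc (-1 : ℝ) 1) (i j : Fin N) (e : Bool) :
    ∀ v o', arlodStep G α q i j e v o' ∈ Set.Icc (-1 : ℝ) 1 := by
  intro v o'
  unfold arlodStep
  split
  · set ex : Bool := if e then !(prefOf (q i)) else prefOf (q i) with hex
    set R : ℝ := if ex = prefOf (q j) then 1 else -1 with hR
    simp only
    split
    · obtain ⟨h1, h2⟩ := hb i ex
      obtain ⟨hα0, hα1⟩ := hα
      have hR1 : -1 ≤ R ∧ R ≤ 1 := by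
        rw [hR]; split <;> norm_num
      constructor <;> nlinarith [hR1.1, hR1.2]
    · exact hb v o'
  · exact hb v o'

lemma step_preserve {N : ℕ} (G : SimpleGraph (Fin N)) [DecidableRel G.Adj] {α : ℝ}
    (hα : α ∈ Set.Ioo (0 : ℝ) 1) {q : Fin N → Bool → ℝ}
    (hb : ∀ v o', q v o' ∈ Set.Icc (-1 : ℝ) 1) {o : Bool}
    (hc : ∀ v, q v (!o) < q v o) (i j : Fin N) (e : Bool) :
    ∀ v, arlodStep G α q i j e v (!o) < arlodStep G α q i j e v o := by
  intro v
  obtain ⟨hα0, hα1⟩ := hα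
  have hpi : prefOf (q i) = o := prefOf_eq (hc i)
  have hpj : prefOf (q j) = o := prefOf_eq (hc j)
  have hb1 := hb v true
  have hb2 := hb v false
  have hcv := hc v
  unfold arlodStep
  split
  · by_cases hv : v = i
    · subst hv
      cases e <;> cases o <;>
        simp_all only [Set.mem_Icc, Bool.not_true, Bool.not_false, if_true, if_false,
          Bool.false_eq_true, Bool.true_eq_false, ite_true, ite_false, and_true, and_false,
          and_self, true_and, false_and, if_pos, Bool.not_true, reduceIte] <;>
        nlinarith [(hb v true).1, (hb v true).2, (hb v false).1, (hb v false).2, hc v]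
    · simp only [hv, false_and, if_neg, ite_false, not_false_iff]
      simpa using hc v
  · exact hc v

/-- In the ARLOD model (N agents on a finite connected graph `G`, learning
rate `α ∈ (0,1)`, exploration rate `ε ∈ (0,1)`; at each round an agent `A t` is chosen
uniformly at random, a neighbour `J t` of it uniformly at random, and it explores with
probability `ε`, independently over rounds; Q-values start in `[-1,1]`), consensus is
stable: if at some time `t0` there is an opinion `o` with `Q^i_o(t0) > Q^i_{-o}(t0)` for
every agent `i`, then almost surely `Q^i_o(t) > Q^i_{-o}(t)` for every agent `i` and
every `t ≥ t0`. -/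
theorem stmt0 {N : ℕ} (hN : 0 < N) (G : SimpleGraph (Fin N)) [DecidableRel G.Adj]
    (hG : G.Connected) (α ε : ℝ) (hα : α ∈ Set.Ioo (0 : ℝ) 1) (hε : ε ∈ Set.Ioo (0 : ℝ) 1)
    {Ω : Type*} [MeasurableSpace Ω] (P : Measure Ω) [IsProbabilityMeasure P]
    (A J : ℕ → Ω → Fin N) (X : ℕ → Ω → Bool)
    (hmeas : ∀ t : ℕ, Measurable (fun ω => (A t ω, J t ω, X t ω)))
    (hindep : iIndepFun (fun t ω => (A t ω, J t ω, X t ω)) P)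
    (hlaw : ∀ (t : ℕ) (i j : Fin N) (e : Bool),
      P {ω | (A t ω, J t ω, X t ω) = (i, j, e)} =
        ENNReal.ofReal ((1 / (N : ℝ)) * (if G.Adj i j then 1 / (G.degree i : ℝ) else 0) *
          (if e then ε else 1 - ε)))
    (Q : ℕ → Ω → Fin N → Bool → ℝ) (q0 : Fin N → Bool → ℝ)
    (hQ0 : ∀ ω, Q 0 ω = q0) (hq0mem : ∀ i o, q0 i o ∈ Set.Icc (-1 : ℝ) 1)
    (hdyn : ∀ (t : ℕ) (ω : Ω),
      Q (t + 1) ω = arlodStep G α (Q t ω) (A t ω) (J t ω) (X t ω)) :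
    ∀ (t0 : ℕ) (o : Bool),
      P {ω | (∀ i, Q t0 ω i (!o) < Q t0 ω i o) →
          ∀ t ≥ t0, ∀ i, Q t ω i (!o) < Q t ω i o} = 1 := by
  intro t0 o
  have hQb : ∀ (t : ℕ) (ω : Ω) (v : Fin N) (o' : Bool), Q t ω v o' ∈ Set.Icc (-1 : ℝ) 1 := by
    intro t
    induction t with
    | zero => intro ω v o'; rw [hQ0 ω]; exact hq0mem v o'
    | succ t ih =>
      intro ω v o'
      rw [hdyn t ω]
      exact step_bounds G hα (ih ω) _ _ _ v o'
  have key : ∀ ω : Ω, (∀ i, Q t0 ω i (!o) < Q t0 ω i o) →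
      ∀ t ≥ t0, ∀ i, Q t ω i (!o) < Q t ω i o := by
    intro ω h t ht
    induction t, ht using Nat.le_induction with
    | base => exact h
    | succ t ht ih =>
      intro i
      rw [hdyn t ω]
      exact step_preserve G hα (hQb t ω) ih _ _ _ i
  have huniv : {ω | (∀ i, Q t0 ω i (!o) < Q t0 ω i o) →
      ∀ t ≥ t0, ∀ i, Q t ω i (!o) < Q t ω i o} = Set.univ :=
    Set.eq_univ_of_forall key
  rw [huniv]
  exact measure_univ


end
end

section
/- In the ARLOD model with learning rate α ∈ (0,1) and exploration rate ε ∈ (0,1) on a finite connected graph G, consensus is reachable from any initial configuration of Q-values: the probability that there exists a finite time t1 and an opinion o ∈ {-1,1} with Q^i_o(t1) > Q^i_{-o}(t1) for all agents i ∈ {1,...,N} is strictly positive. -/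
open MeasureTheory ProbabilityTheory

noncomputable section

namespace ARLOD

lemma pref_of_lt {q : Bool → ℝ} {o : Bool} (h : q (!o) < q o) : prefOf q = o := by
  cases o
  · simp only [Bool.not_false] at h
    simp [prefOf, not_le.2 h]
  · simp only [Bool.not_true] at h
    simp [prefOf, le_of_lt h]

variable {N : ℕ} (G : SimpleGraph (Fin N)) [DecidableRel G.Adj] (α : ℝ)

/-- A forced step: agent `i` talks to `j` and the exploration flag is chosen so that
the expressed opinion is `d`. -/
def force (d : Bool) (i j : Fin N) (q : Fin N → Bool → ℝ) : Fin N → Bool → ℝ :=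
  arlodStep G α q i j (prefOf (q i) != d)

def runC : List (Bool × Fin N × Fin N) → (Fin N → Bool → ℝ) → (Fin N → Bool → ℝ)
  | [], q => q
  | m :: L, q => runC L (force G α m.1 m.2.1 m.2.2 q)

def movesC : List (Bool × Fin N × Fin N) → (Fin N → Bool → ℝ) → List (Fin N × Fin N × Bool)
  | [], _ => []
  | m :: L, q => (m.2.1, m.2.2, prefOf (q m.2.1) != m.1) ::
      movesC L (force G α m.1 m.2.1 m.2.2 q)

lemma force_eq {i j : Fin N} (hAdj : G.Adj i j) (d : Bool) (q : Fin N → Bool → ℝ) :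
    force G α d i j q = fun v o' =>
      if v = i ∧ o' = d then (1 - α) * q i d + α * (if d = prefOf (q j) then 1 else -1)
      else q v o' := by
  have h : (if (prefOf (q i) != d) = true then !(prefOf (q i)) else prefOf (q i)) = d := by
    cases h' : prefOf (q i) <;> cases d <;> simp [h']
  simp only [force, arlodStep, if_pos hAdj, h]

lemma runC_append (L1 L2 : List (Bool × Fin N × Fin N)) (q : Fin N → Bool → ℝ) :
    runC G α (L1 ++ L2) q = runC G α L2 (runC G α L1 q) := by
  induction L1 generalizing q with
  | nil => rfl
  | cons m L ih => simp [runC, ih]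

lemma runC_replicate {i j : Fin N} (hAdj : G.Adj i j) (d : Bool) :
    ∀ (K : ℕ) (q : Fin N → Bool → ℝ),
      (∀ v o', ¬(v = i ∧ o' = d) → runC G α (List.replicate K (d, i, j)) q v o' = q v o') ∧
      (runC G α (List.replicate K (d, i, j)) q i d - (if d = prefOf (q j) then 1 else -1)
        = (1 - α) ^ K * (q i d - (if d = prefOf (q j) then 1 else -1))) := by
  intro K
  induction K with
  | zero => intro q; simp [runC]
  | succ K ih =>
    intro q
    have hne : j ≠ i := hAdj.ne'
    set q1 := force G α d i j q with hq1
    have hf := force_eq G α hAdj d q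
    have hq1j : q1 j = q j := by
      funext o'
      rw [hq1, hf]
      simp only
      rw [if_neg (fun hc => hne hc.1)]
    have hrep : List.replicate (K + 1) (d, i, j) = (d, i, j) :: List.replicate K (d, i, j) :=
      rfl
    have hrun : runC G α (List.replicate (K + 1) (d, i, j)) q
        = runC G α (List.replicate K (d, i, j)) q1 := by
      rw [hrep]; rfl
    obtain ⟨ih1, ih2⟩ := ih q1
    constructor
    · intro v o' hvo
      rw [hrun, ih1 v o' hvo, hq1, hf]
      simp only
      rw [if_neg hvo]
    · rw [hrun]
      have hR : (if d = prefOf (q1 j) then (1:ℝ) else -1)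
          = (if d = prefOf (q j) then (1:ℝ) else -1) := by rw [hq1j]
      rw [hR] at ih2
      rw [ih2]
      have hq1id : q1 i d = (1 - α) * q i d
          + α * (if d = prefOf (q j) then 1 else -1) := by
        rw [hq1, hf]; simp
      rw [hq1id, pow_succ]
      ring

lemma phase (hα0 : 0 < 1 - α) {K : ℕ} (hK : 2 * (1 - α) ^ K < 1) {i j : Fin N} {o : Bool}
    {q : Fin N → Bool → ℝ} (hAdj : G.Adj i j) (ho : prefOf (q j) = o)
    (h1 : q i (!o) ≤ 1) (h2 : -1 ≤ q i o) :
    (∀ v, v ≠ i → runC G α (List.replicate K (!o, i, j) ++ List.replicate K (o, i, j)) q v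
        = q v) ∧
    runC G α (List.replicate K (!o, i, j) ++ List.replicate K (o, i, j)) q i (!o) < 0 ∧
    0 < runC G α (List.replicate K (!o, i, j) ++ List.replicate K (o, i, j)) q i o := by
  have hpow : (0:ℝ) ≤ (1 - α) ^ K := le_of_lt (pow_pos hα0 K)
  have hno : (!o) ≠ o := Bool.not_ne_self o
  set q1 := runC G α (List.replicate K (!o, i, j)) q with hq1
  obtain ⟨d1, d2⟩ := runC_replicate G α hAdj (!o) K q
  have hR1 : (if (!o) = prefOf (q j) then (1:ℝ) else -1) = -1 := by
    rw [ho]; exact if_neg hno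
  rw [hR1] at d2
  have hq1v : ∀ v, v ≠ i → q1 v = q v := by
    intro v hv; funext o'; exact d1 v o' (fun hc => hv hc.1)
  have hq1io : q1 i o = q i o := d1 i o (fun hc => hno hc.2.symm)
  have hq1j : prefOf (q1 j) = o := by rw [hq1v j hAdj.ne', ho]
  have hd2 : q1 i (!o) + 1 = (1 - α) ^ K * (q i (!o) + 1) := by
    have := d2; linarith [d2]
  have hq1neg : q1 i (!o) < 0 := by nlinarith
  rw [runC_append]
  rw [← hq1]
  set q2 := runC G α (List.replicate K (o, i, j)) q1 with hq2
  obtain ⟨e1, e2⟩ := runC_replicate G α hAdj o K q1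
  have hR2 : (if o = prefOf (q1 j) then (1:ℝ) else -1) = 1 := by
    rw [hq1j]; exact if_pos rfl
  rw [hR2] at e2
  have hq2v : ∀ v, v ≠ i → q2 v = q1 v := by
    intro v hv; funext o'; exact e1 v o' (fun hc => hv hc.1)
  have hq2no : q2 i (!o) = q1 i (!o) := e1 i (!o) (fun hc => hno hc.2)
  have hq2pos : 0 < q2 i o := by nlinarith [e2, hq1io]
  refine ⟨fun v hv => by rw [hq2v v hv, hq1v v hv], ?_, hq2pos⟩
  rw [hq2no]; exact hq1neg

lemma cross (T : Set (Fin N)) {a b : Fin N} (w : G.Walk a b) :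
    a ∈ T → b ∉ T → ∃ u ∈ T, ∃ x, x ∉ T ∧ G.Adj u x := by
  induction w with
  | nil => intro h h'; exact absurd h h'
  | @cons a c b h p ih =>
    intro ha hb
    by_cases hc : c ∈ T
    · exact ih hc hb
    · exact ⟨a, ha, c, hc, h⟩

lemma mem_phaseList {m : Bool × Fin N × Fin N} {K : ℕ} {o : Bool} {i j : Fin N}
    (hm : m ∈ List.replicate K (!o, i, j) ++ List.replicate K (o, i, j)) :
    m.2.1 = i ∧ m.2.2 = j := by
  rcases List.mem_append.1 hm with h | h <;>
    rw [List.eq_of_mem_replicate h] <;> exact ⟨rfl, rfl⟩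

lemma build (hconn : G.Connected) (hα0 : 0 < 1 - α) {K : ℕ} (hK : 2 * (1 - α) ^ K < 1)
    (r : Fin N) (o : Bool) (q0 : Fin N → Bool → ℝ)
    (hq0 : ∀ i o', q0 i o' ∈ Set.Icc (-1 : ℝ) 1)
    (hro : prefOf (q0 r) = o) (hN2 : 1 < N) :
    ∀ (n : ℕ) (S : Finset (Fin N)) (q : Fin N → Bool → ℝ), r ∉ S →
      (Finset.univ \ S).card ≤ n →
      (∀ v ∈ S, q v (!o) < q v o) → (∀ v ∉ S, q v = q0 v) →
      ∃ C : List (Bool × Fin N × Fin N), (∀ m ∈ C, G.Adj m.2.1 m.2.2) ∧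
        ∀ v, runC G α C q v (!o) < runC G α C q v o := by
  intro n
  induction n with
  | zero =>
    intro S q hr hcard _ _
    exact absurd (Finset.card_eq_zero.1 (Nat.le_zero.1 hcard))
      (Finset.nonempty_iff_ne_empty.1 ⟨r, Finset.mem_sdiff.2 ⟨Finset.mem_univ r, hr⟩⟩)
  | succ n ih =>
    intro S q hr hcard hS hSc
    -- preference of any member of `S ∪ {r}` is `o`
    have hpref : ∀ u, u ∈ S ∨ u = r → prefOf (q u) = o := by
      rintro u (hu | rfl)
      · exact pref_of_lt (hS u hu)
      · rw [hSc u hr]; exact hro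
    by_cases hall : ∀ v, v ∉ S → v = r
    · -- only `r` is left: one phase for `r`
      haveI : Nontrivial (Fin N) := Fin.nontrivial_iff_two_le.2 hN2
      obtain ⟨v, hv⟩ := exists_ne r
      obtain ⟨w⟩ := hconn.preconnected r v
      have hadjr : ∃ u, G.Adj r u := by
        cases w with
        | nil => exact absurd rfl hv.symm
        | cons h p => exact ⟨_, h⟩
      obtain ⟨u, hu⟩ := hadjr
      have hus : u ∈ S := by
        by_contra hus
        exact hu.ne' (hall u hus)
      have hqr : q r = q0 r := hSc r hr
      obtain ⟨p1, p2, p3⟩ := phase G α hα0 hK hu (hpref u (Or.inl hus))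
        (by rw [hqr]; exact (hq0 r (!o)).2) (by rw [hqr]; exact (hq0 r o).1)
      refine ⟨List.replicate K (!o, r, u) ++ List.replicate K (o, r, u), ?_, ?_⟩
      · intro m hm
        obtain ⟨h1, h2⟩ := mem_phaseList hm
        rw [h1, h2]; exact hu
      · intro v
        by_cases hvr : v = r
        · subst hvr; exact lt_trans p2 p3
        · rw [p1 v hvr]
          exact hS v (by by_contra hvs; exact hvr (hall v hvs))
    · -- there is a vertex `w ∉ S ∪ {r}`; find a crossing edge and run a phase for it
      push_neg at hall
      obtain ⟨w0, hw0S, hw0r⟩ := hall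
      have hw0T : w0 ∉ (↑S ∪ {r} : Set (Fin N)) := by
        simp only [Set.mem_union, Set.mem_singleton_iff, Finset.mem_coe]
        push_neg
        exact ⟨hw0S, hw0r⟩
      obtain ⟨wlk⟩ := hconn.preconnected r w0
      obtain ⟨u, huT, x, hxT, hux⟩ := cross G (↑S ∪ {r}) wlk
        (Or.inr rfl) hw0T
      have hxS : x ∉ S := fun hc => hxT (Or.inl hc)
      have hxr : x ≠ r := fun hc => hxT (Or.inr hc)
      have huor : u ∈ S ∨ u = r := by
        rcases huT with h | h
        · exact Or.inl h
        · exact Or.inr h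
      have hqx : q x = q0 x := hSc x hxS
      have hadjxu : G.Adj x u := hux.symm
      obtain ⟨p1, p2, p3⟩ := phase G α hα0 hK hadjxu (hpref u huor)
        (by rw [hqx]; exact (hq0 x (!o)).2) (by rw [hqx]; exact (hq0 x o).1)
      set C1 := List.replicate K (!o, x, u) ++ List.replicate K (o, x, u) with hC1
      set q' := runC G α C1 q with hq'
      have hr' : r ∉ insert x S := by
        simp only [Finset.mem_insert]
        push_neg
        exact ⟨fun hc => hxr hc.symm, hr⟩
      have hcard' : (Finset.univ \ insert x S).card ≤ n := by
        have h1 : Finset.univ \ insert x S = (Finset.univ \ S).erase x := by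
          ext y
          simp only [Finset.mem_sdiff, Finset.mem_univ, true_and, Finset.mem_insert,
            Finset.mem_erase]
          tauto
        rw [h1]
        have hx' : x ∈ Finset.univ \ S := Finset.mem_sdiff.2 ⟨Finset.mem_univ x, hxS⟩
        have := Finset.card_erase_of_mem hx'
        omega
      have hS' : ∀ v ∈ insert x S, q' v (!o) < q' v o := by
        intro v hv
        rcases Finset.mem_insert.1 hv with rfl | hv
        · exact lt_trans p2 p3
        · have hvx : v ≠ x := fun hc => hxS (hc ▸ hv)
          rw [p1 v hvx]
          exact hS v hv
      have hSc' : ∀ v ∉ insert x S, q' v = q0 v := by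
        intro v hv
        simp only [Finset.mem_insert] at hv
        push_neg at hv
        rw [p1 v hv.1]
        exact hSc v hv.2
      obtain ⟨C2, hC2adj, hC2⟩ := ih (insert x S) q' hr' hcard' hS' hSc'
      refine ⟨C1 ++ C2, ?_, ?_⟩
      · intro m hm
        rcases List.mem_append.1 hm with h | h
        · obtain ⟨h1, h2⟩ := mem_phaseList h
          rw [h1, h2]; exact hadjxu
        · exact hC2adj m h
      · intro v
        rw [runC_append, ← hq']
        exact hC2 v

lemma movesC_length (C : List (Bool × Fin N × Fin N)) (q : Fin N → Bool → ℝ) :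
    (movesC G α C q).length = C.length := by
  induction C generalizing q with
  | nil => rfl
  | cons m L ih => simp [movesC, ih]

lemma movesC_adj {C : List (Bool × Fin N × Fin N)} (hC : ∀ m ∈ C, G.Adj m.2.1 m.2.2) :
    ∀ (q : Fin N → Bool → ℝ), ∀ x ∈ movesC G α C q, G.Adj x.1 x.2.1 := by
  induction C with
  | nil => intro q x hx; exact absurd hx List.not_mem_nil
  | cons m L ih =>
    intro q x hx
    rcases List.mem_cons.1 hx with rfl | hx
    · exact hC m List.mem_cons_self
    · exact ih (fun m' hm' => hC m' (List.mem_cons_of_mem m hm')) _ x hx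

lemma track {Ω : Type*} (A J : ℕ → Ω → Fin N) (X : ℕ → Ω → Bool)
    (Q : ℕ → Ω → Fin N → Bool → ℝ)
    (hdyn : ∀ (t : ℕ) (ω : Ω),
      Q (t + 1) ω = arlodStep G α (Q t ω) (A t ω) (J t ω) (X t ω))
    (e0 : Fin N × Fin N × Bool) :
    ∀ (C : List (Bool × Fin N × Fin N)) (q : Fin N → Bool → ℝ) (t0 : ℕ) (ω : Ω),
      Q t0 ω = q →
      (∀ k, k < C.length → (A (t0 + k) ω, J (t0 + k) ω, X (t0 + k) ω)
          = (movesC G α C q).getD k e0) →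
      Q (t0 + C.length) ω = runC G α C q := by
  intro C
  induction C with
  | nil => intro q t0 ω hq _; simpa [runC] using hq
  | cons m L ih =>
    intro q t0 ω hq hk
    have h0 := hk 0 (Nat.succ_pos _)
    simp only [Nat.add_zero, movesC, List.getD_cons_zero] at h0
    have hA : A t0 ω = m.2.1 := congrArg Prod.fst h0
    have hJ : J t0 ω = m.2.2 := congrArg (fun p => p.2.1) h0
    have hX : X t0 ω = (prefOf (q m.2.1) != m.1) := congrArg (fun p => p.2.2) h0
    have hstep : Q (t0 + 1) ω = force G α m.1 m.2.1 m.2.2 q := by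
      rw [hdyn t0 ω, hq, hA, hJ, hX]; rfl
    have hrest := ih (force G α m.1 m.2.1 m.2.2 q) (t0 + 1) ω hstep ?_
    · have harith : t0 + (m :: L).length = (t0 + 1) + L.length := by
        simp [List.length_cons]; omega
      rw [harith, hrest]
      rfl
    · intro k hkL
      have := hk (k + 1) (by simpa using Nat.succ_lt_succ hkL)
      have harith : t0 + (k + 1) = (t0 + 1) + k := by omega
      rw [harith] at this
      rw [this]
      rfl

end ARLOD

/-- In the ARLOD model with learning rate `α ∈ (0,1)` and exploration rate
`ε ∈ (0,1)` on a finite connected graph `G`, consensus is reachable from any initial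
configuration `q0` of Q-values: with strictly positive probability there exist a finite
time `t1` and an opinion `o` with `Q^i_o(t1) > Q^i_{-o}(t1)` for all agents `i`. -/
theorem stmt1 {N : ℕ} (hN : 0 < N) (G : SimpleGraph (Fin N)) [DecidableRel G.Adj]
    (hG : G.Connected) (α ε : ℝ) (hα : α ∈ Set.Ioo (0 : ℝ) 1) (hε : ε ∈ Set.Ioo (0 : ℝ) 1)
    {Ω : Type*} [MeasurableSpace Ω] (P : Measure Ω) [IsProbabilityMeasure P]
    (A J : ℕ → Ω → Fin N) (X : ℕ → Ω → Bool)
    (hmeas : ∀ t : ℕ, Measurable (fun ω => (A t ω, J t ω, X t ω)))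
    (hindep : iIndepFun (fun t ω => (A t ω, J t ω, X t ω)) P)
    (hlaw : ∀ (t : ℕ) (i j : Fin N) (e : Bool),
      P {ω | (A t ω, J t ω, X t ω) = (i, j, e)} =
        ENNReal.ofReal ((1 / (N : ℝ)) * (if G.Adj i j then 1 / (G.degree i : ℝ) else 0) *
          (if e then ε else 1 - ε)))
    (Q : ℕ → Ω → Fin N → Bool → ℝ) (q0 : Fin N → Bool → ℝ)
    (hQ0 : ∀ ω, Q 0 ω = q0) (hq0mem : ∀ i o, q0 i o ∈ Set.Icc (-1 : ℝ) 1)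
    (hdyn : ∀ (t : ℕ) (ω : Ω),
      Q (t + 1) ω = arlodStep G α (Q t ω) (A t ω) (J t ω) (X t ω)) :
    0 < P {ω | ∃ t1 : ℕ, ∃ o : Bool, ∀ i, Q t1 ω i (!o) < Q t1 ω i o} := by
  obtain ⟨hα0, hα1⟩ := hα
  obtain ⟨hε0, hε1⟩ := hε
  rcases Nat.lt_or_ge N 2 with hN1 | hN2
  · -- N = 1 : the law hypothesis is contradictory
    exfalso
    have hN1' : N = 1 := by omega
    subst hN1'
    have hcov : (Set.univ : Set Ω) ⊆
        {ω | (A 0 ω, J 0 ω, X 0 ω) = ((0 : Fin 1), (0 : Fin 1), true)} ∪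
        {ω | (A 0 ω, J 0 ω, X 0 ω) = ((0 : Fin 1), (0 : Fin 1), false)} := by
      intro ω _
      have hA : A 0 ω = 0 := Fin.eq_zero _
      have hJ : J 0 ω = 0 := Fin.eq_zero _
      cases hX : X 0 ω
      · right; simp [Set.mem_setOf_eq, hA, hJ, hX]
      · left; simp [Set.mem_setOf_eq, hA, hJ, hX]
    have hzero : ∀ e : Bool, P {ω | (A 0 ω, J 0 ω, X 0 ω) = ((0 : Fin 1), (0 : Fin 1), e)}
        = 0 := by
      intro e
      rw [hlaw 0 0 0 e, if_neg (G.irrefl)]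
      simp
    have h1 : (1 : ENNReal) ≤ 0 := by
      calc (1 : ENNReal) = P Set.univ := (measure_univ).symm
        _ ≤ P ({ω | (A 0 ω, J 0 ω, X 0 ω) = ((0 : Fin 1), (0 : Fin 1), true)} ∪
            {ω | (A 0 ω, J 0 ω, X 0 ω) = ((0 : Fin 1), (0 : Fin 1), false)}) :=
          measure_mono hcov
        _ ≤ P {ω | (A 0 ω, J 0 ω, X 0 ω) = ((0 : Fin 1), (0 : Fin 1), true)} +
            P {ω | (A 0 ω, J 0 ω, X 0 ω) = ((0 : Fin 1), (0 : Fin 1), false)} :=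
          measure_union_le _ _
        _ = 0 := by rw [hzero true, hzero false, add_zero]
    exact (by norm_num : ¬((1 : ENNReal) ≤ 0)) h1
  · -- main case
    set r : Fin N := ⟨0, hN⟩ with hr
    set o : Bool := prefOf (q0 r) with ho
    have hα0' : (0 : ℝ) < 1 - α := by linarith
    obtain ⟨K, hKlt⟩ := exists_pow_lt_of_lt_one (by norm_num : (0:ℝ) < 1/2)
      (by linarith : 1 - α < 1)
    have hK : 2 * (1 - α) ^ K < 1 := by linarith
    obtain ⟨C, hCadj, hCcons⟩ := ARLOD.build G α hG hα0' hK r o q0 hq0mem rfl hN2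
      N ∅ q0 (Finset.notMem_empty r) (by rw [Finset.sdiff_empty, Finset.card_univ, Fintype.card_fin])
      (fun v hv => absurd hv (Finset.notMem_empty v)) (fun v _ => rfl)
    set e0 : Fin N × Fin N × Bool := (r, r, false) with he0
    set M : List (Fin N × Fin N × Bool) := ARLOD.movesC G α C q0 with hM
    have hMlen : M.length = C.length := ARLOD.movesC_length G α C q0
    set T : ℕ := C.length with hT
    set E : Set Ω := ⋂ t ∈ Finset.range T,
      (fun ω => (A t ω, J t ω, X t ω)) ⁻¹' ({M.getD t e0} : Set (Fin N × Fin N × Bool))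
      with hE
    have hEsub : E ⊆ {ω | ∃ t1 : ℕ, ∃ o : Bool, ∀ i, Q t1 ω i (!o) < Q t1 ω i o} := by
      intro ω hω
      have hmoves : ∀ k, k < C.length →
          (A (0 + k) ω, J (0 + k) ω, X (0 + k) ω) = M.getD k e0 := by
        intro k hk
        have := Set.mem_iInter₂.1 hω k (Finset.mem_range.2 hk)
        simpa using this
      have hQT : Q (0 + T) ω = ARLOD.runC G α C q0 :=
        ARLOD.track G α A J X Q hdyn e0 C q0 0 ω (hQ0 ω) hmoves
      exact ⟨0 + T, o, fun i => by rw [hQT]; exact hCcons i⟩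
    refine lt_of_lt_of_le ?_ (measure_mono hEsub)
    have hEeq : P E = ∏ t ∈ Finset.range T,
        P ((fun ω => (A t ω, J t ω, X t ω)) ⁻¹' {M.getD t e0}) :=
      hindep.measure_inter_preimage_eq_mul (Finset.range T)
        (fun i _ => measurableSet_singleton _)
    rw [hEeq, pos_iff_ne_zero, Finset.prod_ne_zero_iff]
    intro t ht
    have ht' : t < M.length := by rw [hMlen]; exact Finset.mem_range.1 ht
    have hmem : M.getD t e0 ∈ M := by
      rw [List.getD_eq_getElem M e0 ht']
      exact List.getElem_mem ht'
    have hadj : G.Adj (M.getD t e0).1 (M.getD t e0).2.1 :=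
      ARLOD.movesC_adj G α hCadj q0 _ hmem
    have hset : (fun ω => (A t ω, J t ω, X t ω)) ⁻¹' {M.getD t e0} =
        {ω | (A t ω, J t ω, X t ω)
          = ((M.getD t e0).1, (M.getD t e0).2.1, (M.getD t e0).2.2)} := by
      ext ω; simp [Set.mem_preimage]
    rw [hset, hlaw, if_pos hadj]
    refine (ENNReal.ofReal_pos.2 ?_).ne'
    have hdeg : 0 < G.degree (M.getD t e0).1 :=
      (G.degree_pos_iff_exists_adj _).2 ⟨_, hadj⟩
    have h1 : (0:ℝ) < 1 / (N : ℝ) := by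
      apply div_pos one_pos
      exact_mod_cast hN
    have h2 : (0:ℝ) < 1 / (G.degree (M.getD t e0).1 : ℝ) := by
      apply div_pos one_pos
      exact_mod_cast hdeg
    have h3 : (0:ℝ) < (if (M.getD t e0).2.2 then ε else 1 - ε) := by
      split_ifs <;> linarith
    exact mul_pos (mul_pos h1 h2) h3


end
end

section
/- In the ARLOD model with learning rate α ∈ (0,1) and exploration rate ε ∈ (0,1) on a finite connected graph G, consensus is guaranteed: with probability one there exists a finite time t0 and an opinion o ∈ {-1,1} such that Q^i_o(t) > Q^i_{-o}(t) for all agents i ∈ {1,...,N} and all t ≥ t0. -/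
open MeasureTheory ProbabilityTheory
open scoped ENNReal

noncomputable section

namespace Arlod

lemma prefOf_true_iff {q : Bool → ℝ} : prefOf q = true ↔ q false ≤ q true := by
  unfold prefOf
  split
  · next h => simp [h]
  · next h => simp [h]

lemma prefOf_false_iff {q : Bool → ℝ} : prefOf q = false ↔ q true < q false := by
  unfold prefOf
  split
  · next h => simp [not_lt.mpr h]
  · next h => simp [not_le.mp h]

lemma prefOf_eq_of_lt {q : Bool → ℝ} {o : Bool} (h : q (!o) < q o) : prefOf q = o := by
  cases o
  · exact prefOf_false_iff.mpr (by simpa using h)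
  · exact prefOf_true_iff.mpr (by simpa using h.le)

lemma prefOf_stable {q q' : Bool → ℝ} {o : Bool} (h : prefOf q = o)
    (h1 : q o ≤ q' o) (h2 : q' (!o) ≤ q (!o)) : prefOf q' = o := by
  cases o
  · rw [prefOf_false_iff] at h ⊢
    simp only [Bool.not_false] at h2
    linarith
  · rw [prefOf_true_iff] at h ⊢
    simp only [Bool.not_true] at h2
    linarith

lemma bool_ne_iff {b o : Bool} (h : b ≠ o) : b = !o := by
  cases b <;> cases o <;> simp_all

variable {N : ℕ} (G : SimpleGraph (Fin N)) [DecidableRel G.Adj] (α : ℝ)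

abbrev Trip (N : ℕ) := Fin N × Fin N × Bool

def stepT (q : Fin N → Bool → ℝ) (z : Trip N) : Fin N → Bool → ℝ :=
  arlodStep G α q z.1 z.2.1 z.2.2

def run (q : Fin N → Bool → ℝ) (l : List (Trip N)) : Fin N → Bool → ℝ :=
  l.foldl (stepT G α) q

@[simp] lemma run_nil (q : Fin N → Bool → ℝ) : run G α q ([] : List (Trip N)) = q := rfl

lemma run_cons (q : Fin N → Bool → ℝ) (a : Trip N) (l : List (Trip N)) :
    run G α q (a :: l) = run G α (stepT G α q a) l := rfl

lemma run_append (q : Fin N → Bool → ℝ) (l₁ l₂ : List (Trip N)) :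
    run G α q (l₁ ++ l₂) = run G α (run G α q l₁) l₂ := by simp [run]

def InIcc (q : Fin N → Bool → ℝ) : Prop := ∀ i o, -1 ≤ q i o ∧ q i o ≤ 1

def Cons (o : Bool) (q : Fin N → Bool → ℝ) : Prop := ∀ i, q i (!o) < q i o

variable {G α}

lemma arlodStep_adj {q : Fin N → Bool → ℝ} {i j : Fin N} {e : Bool} (hAdj : G.Adj i j) :
    arlodStep G α q i j e = fun v b =>
      if v = i ∧ b = (if e then !(prefOf (q i)) else prefOf (q i)) then
        (1 - α) * q i (if e then !(prefOf (q i)) else prefOf (q i)) +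
          α * (if (if e then !(prefOf (q i)) else prefOf (q i)) = prefOf (q j) then 1 else -1)
      else q v b := by
  unfold arlodStep
  rw [if_pos hAdj]

lemma step_InIcc (hα : 0 < α) (hα1 : α < 1) {q : Fin N → Bool → ℝ} (hq : InIcc q)
    (i j : Fin N) (e : Bool) : InIcc (arlodStep G α q i j e) := by
  by_cases hAdj : G.Adj i j
  · rw [arlodStep_adj hAdj]
    intro v b
    dsimp only
    set ex := if e then !(prefOf (q i)) else prefOf (q i)
    obtain ⟨h1, h2⟩ := hq i ex
    split
    · split <;> constructor <;> nlinarith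
    · exact hq v b
  · unfold arlodStep
    rw [if_neg hAdj]
    exact hq

lemma run_InIcc (hα : 0 < α) (hα1 : α < 1) {q : Fin N → Bool → ℝ} (hq : InIcc q)
    (l : List (Trip N)) : InIcc (run G α q l) := by
  induction l generalizing q with
  | nil => exact hq
  | cons a l ih => exact ih (step_InIcc hα hα1 hq _ _ _)

lemma cons_step (hα : 0 < α) (hα1 : α < 1) {q : Fin N → Bool → ℝ} {o : Bool}
    (hq : InIcc q) (hc : Cons o q) (i j : Fin N) (e : Bool) :
    Cons o (arlodStep G α q i j e) := by
  by_cases hAdj : G.Adj i j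
  · have hpi : prefOf (q i) = o := prefOf_eq_of_lt (hc i)
    have hpj : prefOf (q j) = o := prefOf_eq_of_lt (hc j)
    rw [arlodStep_adj hAdj]
    intro v
    dsimp only
    have hoo : ((!o) = o) = False := by simp
    have hbo : (o = !o) = False := by simp
    cases e
    · -- expressed = o, reward 1
      simp only [hpi, hpj, Bool.false_eq_true, if_false, if_true, hoo, hbo, and_false,
        eq_self_iff_true, and_true]
      by_cases hv : v = i
      · subst hv
        rw [if_pos rfl]
        have h1 := (hq v o).2
        have h2 := hc v
        nlinarith
      · rw [if_neg hv]
        exact hc v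
    · -- expressed = !o, reward -1
      simp only [hpi, hpj, Bool.true_eq_false, if_true, if_false, hoo, hbo, and_false,
        eq_self_iff_true, and_true]
      by_cases hv : v = i
      · subst hv
        rw [if_pos rfl]
        have h1 := (hq v (!o)).1
        have h2 := hc v
        nlinarith
      · rw [if_neg hv]
        exact hc v
  · unfold arlodStep
    rw [if_neg hAdj]
    exact hc

section Pair

def pairList (i u : Fin N) : List (Trip N) := [(i, u, false), (i, u, true)]

lemma pair_lemma (hα : 0 < α) (hα1 : α < 1) {q : Fin N → Bool → ℝ} {i u : Fin N} {o : Bool}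
    (hAdj : G.Adj i u) (hq : InIcc q) (hpu : prefOf (q u) = o) :
    (∀ v, v ≠ i → ∀ b, run G α q (pairList i u) v b = q v b) ∧
    run G α q (pairList i u) i (!o) ≤ (1 - α) * q i (!o) - α ∧
    (run G α q (pairList i u) i o = q i o ∨
      run G α q (pairList i u) i o = (1 - α) * q i o + α) ∧
    (prefOf (q i) = o → run G α q (pairList i u) i o = (1 - α) * q i o + α) ∧
    (run G α q (pairList i u) i o = q i o →
      prefOf (run G α q (pairList i u) i) = o) := by
  have hiu : i ≠ u := hAdj.ne
  have hui : (u = i) = False := by simp [Ne.symm hiu]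
  have hno : ((!o) = o) = False := by simp
  have hon : (o = !o) = False := by simp
  set q1 := arlodStep G α q i u false with hq1def
  set q2 := arlodStep G α q1 i u true with hq2def
  have hrun : run G α q (pairList i u) = q2 := rfl
  rw [hrun]
  rcases eq_or_ne (prefOf (q i)) o with hp | hp0
  · -- Case A : pref of i is already o
    have h1 : ∀ v b, q1 v b = if v = i ∧ b = o then (1 - α) * q i o + α else q v b := by
      intro v b
      rw [hq1def, arlodStep_adj hAdj]
      simp only [hp, hpu, Bool.false_eq_true, if_false, if_true, mul_one, eq_self_iff_true]
    have h1u : q1 u = q u := funext fun b => by rw [h1]; simp [hui]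
    have h1i_o : q1 i o = (1 - α) * q i o + α := by rw [h1]; simp
    have h1i_no : q1 i (!o) = q i (!o) := by rw [h1]; simp [hno]
    have hp1 : prefOf (q1 i) = o :=
      prefOf_stable hp (by rw [h1i_o]; nlinarith [(hq i o).2]) (le_of_eq h1i_no)
    have hpu1 : prefOf (q1 u) = o := by rw [h1u, hpu]
    have h2 : ∀ v b, q2 v b =
        if v = i ∧ b = !o then (1 - α) * q1 i (!o) + α * (-1) else q1 v b := by
      intro v b
      rw [hq2def, arlodStep_adj hAdj]
      simp only [hp1, hpu1, if_true, hno, if_false]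
    have h2i_no : q2 i (!o) = (1 - α) * q i (!o) - α := by
      rw [h2, if_pos ⟨rfl, rfl⟩, h1i_no]; ring
    have h2i_o : q2 i o = (1 - α) * q i o + α := by
      rw [h2, if_neg (by simp [hon]), h1i_o]
    refine ⟨?_, le_of_eq h2i_no, Or.inr h2i_o, fun _ => h2i_o, fun _ => ?_⟩
    · intro v hv b
      rw [h2, if_neg (by simp [hv]), h1, if_neg (by simp [hv])]
    · refine prefOf_stable hp1 (le_of_eq ?_) ?_
      · rw [h2, if_neg (by simp [hon])]
      · rw [h2i_no, h1i_no]
        nlinarith [(hq i (!o)).1]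
  · -- Case B : pref of i is !o
    have hp : prefOf (q i) = !o := bool_ne_iff hp0
    have h1 : ∀ v b, q1 v b =
        if v = i ∧ b = !o then (1 - α) * q i (!o) + α * (-1) else q v b := by
      intro v b
      rw [hq1def, arlodStep_adj hAdj]
      simp only [hp, hpu, Bool.false_eq_true, if_false, if_true, hno]
    have h1u : q1 u = q u := funext fun b => by rw [h1]; simp [hui]
    have h1i_o : q1 i o = q i o := by rw [h1]; simp [hon]
    have h1i_no : q1 i (!o) = (1 - α) * q i (!o) - α := by
      rw [h1, if_pos ⟨rfl, rfl⟩]; ring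
    have hpu1 : prefOf (q1 u) = o := by rw [h1u, hpu]
    rcases eq_or_ne (prefOf (q1 i)) o with hp' | hp'0
    · -- B2 : pref flipped to o after first step; second step expresses !o again
      have h2 : ∀ v b, q2 v b =
          if v = i ∧ b = !o then (1 - α) * q1 i (!o) + α * (-1) else q1 v b := by
        intro v b
        rw [hq2def, arlodStep_adj hAdj]
        simp only [hp', hpu1, if_true, hno, if_false]
      have h2i_no : q2 i (!o) = (1 - α) * q1 i (!o) - α := by
        rw [h2, if_pos ⟨rfl, rfl⟩]; ring
      have h2i_o : q2 i o = q i o := by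
        rw [h2, if_neg (by simp [hon]), h1i_o]
      have hff : q2 i (!o) ≤ (1 - α) * q i (!o) - α := by
        rw [h2i_no, h1i_no]
        nlinarith [mul_nonneg (mul_nonneg hα.le (by linarith : (0:ℝ) ≤ 1 - α))
          (by linarith [(hq i (!o)).1] : (0:ℝ) ≤ q i (!o) + 1)]
      refine ⟨?_, hff, Or.inl h2i_o, fun h => ?_, fun _ => ?_⟩
      · intro v hv b
        rw [h2, if_neg (by simp [hv]), h1, if_neg (by simp [hv])]
      · rw [hp] at h; simp at h
      · exact prefOf_stable hp' (le_of_eq (h1i_o.trans h2i_o.symm))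
          (hff.trans (le_of_eq h1i_no.symm))
    · -- B1 : pref still !o after first step; second step expresses o
      have hp' : prefOf (q1 i) = !o := bool_ne_iff hp'0
      have h2 : ∀ v b, q2 v b =
          if v = i ∧ b = o then (1 - α) * q1 i o + α * 1 else q1 v b := by
        intro v b
        rw [hq2def, arlodStep_adj hAdj]
        simp only [hp', hpu1, if_true, Bool.not_not, eq_self_iff_true, if_pos]
      have h2i_o : q2 i o = (1 - α) * q i o + α := by
        rw [h2, if_pos ⟨rfl, rfl⟩, h1i_o]; ring
      have h2i_no : q2 i (!o) = (1 - α) * q i (!o) - α := by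
        rw [h2, if_neg (by simp [hno]), h1i_no]
      refine ⟨?_, le_of_eq h2i_no, Or.inr h2i_o, fun _ => h2i_o, fun h => ?_⟩
      · intro v hv b
        rw [h2, if_neg (by simp [hv]), h1, if_neg (by simp [hv])]
      · -- would mean q i o = 1, contradicting pref !o after step 1
        exfalso
        rw [h2i_o] at h
        have hx1 : q i o = 1 := by nlinarith
        have hy1 : q1 i (!o) < 1 := by
          rw [h1i_no]; nlinarith [(hq i (!o)).2]
        have hy1' : q1 i (!o) < q1 i o := by
          rw [h1i_o, hx1]; exact hy1
        exact hp'0 (prefOf_eq_of_lt hy1')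

def phase : ℕ → Fin N → Fin N → List (Trip N)
  | 0, _, _ => []
  | n+1, i, u => pairList i u ++ phase n i u

lemma mem_phase {n : ℕ} {i u : Fin N} {z : Trip N} (hz : z ∈ phase n i u) :
    z = (i, u, false) ∨ z = (i, u, true) := by
  induction n with
  | zero => simp [phase] at hz
  | succ n ih =>
    simp only [phase, pairList, List.mem_append, List.mem_cons, List.mem_singleton] at hz
    rcases hz with (h | h) | h
    · exact Or.inl h
    · exact Or.inr (by simpa using h)
    · exact ih h

lemma phase_props (hα : 0 < α) (hα1 : α < 1) {i u : Fin N} {o : Bool} (hAdj : G.Adj i u) :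
    ∀ (n : ℕ) (q : Fin N → Bool → ℝ), InIcc q → prefOf (q u) = o →
    (∀ v, v ≠ i → ∀ b, run G α q (phase n i u) v b = q v b) ∧
    (run G α q (phase n i u) i (!o) ≤ -1 + (1 - α) ^ n * (1 + q i (!o))) ∧
    ((2 * α - 1 ≤ q i o ∨ prefOf (q i) = o) → 1 ≤ n →
      2 * α - 1 ≤ run G α q (phase n i u) i o) ∧
    (2 ≤ n → 2 * α - 1 ≤ run G α q (phase n i u) i o) := by
  intro n
  induction n with
  | zero =>
    intro q hq hpu
    have h0 : run G α q (phase 0 i u) = q := rfl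
    refine ⟨fun v _ b => rfl, ?_, fun _ h => by omega, fun h => by omega⟩
    rw [h0, pow_zero]
    linarith
  | succ n ih =>
    intro q hq hpu
    obtain ⟨P1, P2, P3, P4, P5⟩ := pair_lemma hα hα1 hAdj hq hpu
    set q1 := run G α q (pairList i u) with hq1def
    have hrw : run G α q (phase (n+1) i u) = run G α q1 (phase n i u) := by
      rw [phase, run_append]
    have hq1 : InIcc q1 := run_InIcc hα hα1 hq _
    have hpu1 : prefOf (q1 u) = o := by
      have : q1 u = q u := funext fun b => P1 u (Ne.symm hAdj.ne) b
      rw [this, hpu]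
    obtain ⟨IH1, IH2, IH3, IH4⟩ := ih q1 hq1 hpu1
    have hx := (hq i o).1
    have hy := (hq i (!o)).1
    have hpow : (0:ℝ) ≤ (1 - α) ^ n := pow_nonneg (by linarith) n
    have hSq1 : 2 * α - 1 ≤ q1 i o ∨ prefOf (q1 i) = o := by
      by_cases hcase : q1 i o = q i o
      · exact Or.inr (P5 hcase)
      · rcases P3 with h | h
        · exact absurd h hcase
        · refine Or.inl ?_
          rw [h]; nlinarith
    refine ⟨?_, ?_, ?_, ?_⟩
    · intro v hv b
      rw [hrw, IH1 v hv b, P1 v hv b]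
    · rw [hrw]
      have hstep : 1 + q1 i (!o) ≤ (1 - α) * (1 + q i (!o)) := by
        have := P2; linarith [P2]
      calc run G α q1 (phase n i u) i (!o) ≤ -1 + (1 - α) ^ n * (1 + q1 i (!o)) := IH2
        _ ≤ -1 + (1 - α) ^ n * ((1 - α) * (1 + q i (!o))) := by
            have := mul_le_mul_of_nonneg_left hstep hpow
            linarith
        _ = -1 + (1 - α) ^ (n + 1) * (1 + q i (!o)) := by ring
    · intro hS _
      have hq1o : 2 * α - 1 ≤ q1 i o := by
        rcases hS with hxo | hpref
        · rcases P3 with h | h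
          · rw [h]; exact hxo
          · rw [h]; nlinarith
        · rw [P4 hpref]; nlinarith
      rw [hrw]
      rcases Nat.eq_zero_or_pos n with hn0 | hn1
      · subst hn0; exact hq1o
      · exact IH3 (Or.inl hq1o) hn1
    · intro h2n
      rw [hrw]
      exact IH3 hSq1 (by omega)

lemma phase_final (hα : 0 < α) (hα1 : α < 1) {i u : Fin N} {o : Bool} (hAdj : G.Adj i u)
    {K : ℕ} (hK2 : 2 ≤ K) (hKα : (1 - α) ^ K < α) {q : Fin N → Bool → ℝ}
    (hq : InIcc q) (hpu : prefOf (q u) = o) :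
    (∀ v, v ≠ i → ∀ b, run G α q (phase K i u) v b = q v b) ∧
    run G α q (phase K i u) i (!o) < run G α q (phase K i u) i o := by
  obtain ⟨P1, P2, _, P4⟩ := phase_props hα hα1 hAdj K q hq hpu
  refine ⟨P1, ?_⟩
  have h2 := P4 hK2
  have hy := (hq i (!o)).2
  have hpow : (0:ℝ) ≤ (1 - α) ^ K := pow_nonneg (by linarith) K
  nlinarith [P2, mul_nonneg hpow (by linarith : (0:ℝ) ≤ 1 - q i (!o))]

def seqW (K : ℕ) : ∀ {a b : Fin N}, G.Walk a b → List (Trip N)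
  | _, _, SimpleGraph.Walk.nil => []
  | a, _, SimpleGraph.Walk.cons (v := c) _ p => phase K c a ++ seqW K p

lemma seqW_adj {K : ℕ} : ∀ {a b : Fin N} (w : G.Walk a b) (z : Trip N),
    z ∈ seqW K w → G.Adj z.1 z.2.1 := by
  intro a b w
  induction w with
  | nil => intro z hz; simp [seqW] at hz
  | @cons a c b h p ih =>
    intro z hz
    rw [show seqW K (SimpleGraph.Walk.cons h p) = phase K c a ++ seqW K p from rfl,
      List.mem_append] at hz
    rcases hz with hz | hz
    · rcases mem_phase hz with rfl | rfl <;> exact h.symm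
    · exact ih z hz

lemma walk_run (hα : 0 < α) (hα1 : α < 1) {K : ℕ} (hK2 : 2 ≤ K) (hKα : (1 - α) ^ K < α)
    {o : Bool} :
    ∀ {a b : Fin N} (w : G.Walk a b) (q : Fin N → Bool → ℝ), InIcc q → prefOf (q a) = o →
    (∀ v ∈ w.support.tail, run G α q (seqW K w) v (!o) < run G α q (seqW K w) v o) ∧
    (∀ v, v ∉ w.support.tail → ∀ b', run G α q (seqW K w) v b' = q v b') := by
  intro a b w
  induction w with
  | nil =>
    intro q hq hpa
    constructor
    · intro v hv
      simp [SimpleGraph.Walk.support_nil] at hv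
    · intro v _ b'
      rfl
  | @cons a c b h p ih =>
    intro q hq hpa
    obtain ⟨W1, W2⟩ := phase_final hα hα1 h.symm hK2 hKα hq hpa
    set q1 := run G α q (phase K c a) with hq1def
    have hq1 : InIcc q1 := run_InIcc hα hα1 hq _
    have hp1 : prefOf (q1 c) = o := prefOf_eq_of_lt W2
    obtain ⟨I1, I2⟩ := ih q1 hq1 hp1
    have hrw : run G α q (seqW K (SimpleGraph.Walk.cons h p)) = run G α q1 (seqW K p) := by
      rw [show seqW K (SimpleGraph.Walk.cons h p) = phase K c a ++ seqW K p from rfl, run_append]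
    have htail : (SimpleGraph.Walk.cons h p).support.tail = p.support := by
      rw [SimpleGraph.Walk.support_cons, List.tail_cons]
    constructor
    · intro v hv
      rw [htail] at hv
      rw [hrw]
      by_cases hvt : v ∈ p.support.tail
      · exact I1 v hvt
      · have hvc : v = c := by
          rw [SimpleGraph.Walk.support_eq_cons p] at hv
          rcases List.mem_cons.mp hv with h' | h'
          · exact h'
          · exact absurd h' hvt
        subst hvc
        rw [I2 v hvt (!o), I2 v hvt o]
        exact W2
    · intro v hv b'
      rw [htail] at hv
      have hvt : v ∉ p.support.tail := fun hh => hv (List.mem_of_mem_tail hh)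
      have hvc : v ≠ c := fun hh => hv (hh ▸ SimpleGraph.Walk.start_mem_support p)
      rw [hrw, I2 v hvt b', W1 v hvc b']

lemma exists_force (hα : 0 < α) (hα1 : α < 1) (hG : G.Connected) (hN2 : 2 ≤ N) :
    ∃ s : List (Trip N), (∀ z ∈ s, G.Adj z.1 z.2.1) ∧
      ∀ q : Fin N → Bool → ℝ, InIcc q → ∃ o : Bool, Cons o (run G α q s) := by
  obtain ⟨K0, hK0⟩ := exists_pow_lt_of_lt_one hα (by linarith : 1 - α < 1)
  have hK2 : 2 ≤ K0 + 2 := by omega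
  have hKα : (1 - α) ^ (K0 + 2) < α :=
    lt_of_le_of_lt (pow_le_pow_of_le_one (by linarith) (by linarith) (by omega)) hK0
  have hN0 : 0 < N := by omega
  set v0 : Fin N := ⟨0, hN0⟩ with hv0def
  have hcov : ∀ l : List (Fin N), ∃ w : G.Walk v0 v0, ∀ u ∈ l, u ∈ w.support := by
    intro l
    induction l with
    | nil => exact ⟨SimpleGraph.Walk.nil, by simp⟩
    | cons x l ih =>
      obtain ⟨w, hw⟩ := ih
      obtain ⟨p⟩ := hG.preconnected v0 x
      refine ⟨(p.append p.reverse).append w, ?_⟩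
      intro u hu
      rcases List.mem_cons.mp hu with h | h
      · subst h
        rw [SimpleGraph.Walk.mem_support_append_iff]
        exact Or.inl (by
          rw [SimpleGraph.Walk.mem_support_append_iff]
          exact Or.inl (SimpleGraph.Walk.end_mem_support p))
      · rw [SimpleGraph.Walk.mem_support_append_iff]
        exact Or.inr (hw u h)
  obtain ⟨w, hw'⟩ := hcov (List.finRange N)
  have hw : ∀ u : Fin N, u ∈ w.support := fun u => hw' u (List.mem_finRange u)
  have hne : ∀ {x y : Fin N} (p : G.Walk x y), p.support.tail = [] ∨ y ∈ p.support.tail := by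
    intro x y p
    cases p with
    | nil => left; rfl
    | cons h' p' =>
      right
      rw [SimpleGraph.Walk.support_cons]
      simpa using SimpleGraph.Walk.end_mem_support p'
  have hu1v0 : (⟨1, by omega⟩ : Fin N) ≠ v0 := Fin.ne_of_val_ne (by rw [hv0def]; simp)
  have htail : ∀ u : Fin N, u ∈ w.support.tail := by
    intro u
    have hsup := hw u
    rw [SimpleGraph.Walk.support_eq_cons w] at hsup
    rcases List.mem_cons.mp hsup with h | h
    · subst h
      rcases hne w with h0 | h0
      · exfalso
        have h1 := hw ⟨1, by omega⟩
        rw [SimpleGraph.Walk.support_eq_cons w, h0] at h1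
        simp at h1
        exact hu1v0 h1
      · exact h0
    · exact h
  refine ⟨seqW (K0 + 2) w, fun z hz => seqW_adj w z hz, ?_⟩
  intro q hq
  refine ⟨prefOf (q v0), ?_⟩
  obtain ⟨S1, _⟩ := walk_run hα hα1 hK2 hKα w q hq rfl
  intro i
  exact S1 i (htail i)

end Pair

end Arlod

open Arlod

/-- In the ARLOD model with learning rate `α ∈ (0,1)` and exploration rate
`ε ∈ (0,1)` on a finite connected graph `G`, consensus is guaranteed: with probability
one there exist a finite time `t0` and an opinion `o` such that
`Q^i_o(t) > Q^i_{-o}(t)` for all agents `i` and all `t ≥ t0`. -/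
theorem stmt3 {N : ℕ} (hN : 0 < N) (G : SimpleGraph (Fin N)) [DecidableRel G.Adj]
    (hG : G.Connected) (α ε : ℝ) (hα : α ∈ Set.Ioo (0 : ℝ) 1) (hε : ε ∈ Set.Ioo (0 : ℝ) 1)
    {Ω : Type*} [MeasurableSpace Ω] (P : Measure Ω) [IsProbabilityMeasure P]
    (A J : ℕ → Ω → Fin N) (X : ℕ → Ω → Bool)
    (hmeas : ∀ t : ℕ, Measurable (fun ω => (A t ω, J t ω, X t ω)))
    (hindep : iIndepFun (fun t ω => (A t ω, J t ω, X t ω)) P)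
    (hlaw : ∀ (t : ℕ) (i j : Fin N) (e : Bool),
      P {ω | (A t ω, J t ω, X t ω) = (i, j, e)} =
        ENNReal.ofReal ((1 / (N : ℝ)) * (if G.Adj i j then 1 / (G.degree i : ℝ) else 0) *
          (if e then ε else 1 - ε)))
    (Q : ℕ → Ω → Fin N → Bool → ℝ) (q0 : Fin N → Bool → ℝ)
    (hQ0 : ∀ ω, Q 0 ω = q0) (hq0mem : ∀ i o, q0 i o ∈ Set.Icc (-1 : ℝ) 1)
    (hdyn : ∀ (t : ℕ) (ω : Ω),
      Q (t + 1) ω = arlodStep G α (Q t ω) (A t ω) (J t ω) (X t ω)) :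
    P {ω | ∃ t0 : ℕ, ∃ o : Bool, ∀ t ≥ t0, ∀ i, Q t ω i (!o) < Q t ω i o} = 1 := by
  classical
  obtain ⟨hα0, hα1⟩ := hα
  obtain ⟨hε0, hε1⟩ := hε
  rcases Nat.lt_or_ge N 2 with hN1 | hN2
  · -- degenerate case N = 1 : the law hypothesis is contradictory
    exfalso
    have hN' : N = 1 := by omega
    have hnoadj : ∀ i j : Fin N, ¬ G.Adj i j := by
      intro i j hadj
      have hij : i = j := by
        subst hN'
        exact Subsingleton.elim i j
      rw [hij] at hadj
      exact G.irrefl hadj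
    have hcover : (Set.univ : Set Ω) ⊆
        ⋃ z : Fin N × Fin N × Bool, {ω | (A 0 ω, J 0 ω, X 0 ω) = z} :=
      fun ω _ => Set.mem_iUnion.mpr ⟨(A 0 ω, J 0 ω, X 0 ω), rfl⟩
    have hzero : ∀ z : Fin N × Fin N × Bool, P {ω | (A 0 ω, J 0 ω, X 0 ω) = z} = 0 := by
      rintro ⟨i, j, e⟩
      rw [hlaw 0 i j e, if_neg (hnoadj i j)]
      simp
    have hle := (measure_mono (μ := P) hcover).trans (measure_iUnion_le _)
    rw [measure_univ] at hle
    simp only [hzero, tsum_zero] at hle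
    simp at hle
  · obtain ⟨s, hsadj, hsforce⟩ := Arlod.exists_force hα0 hα1 hG hN2
    set L := s.length with hL
    have hN0 : 0 < N := by omega
    set z0 : Trip N := (⟨0, hN0⟩, ⟨0, hN0⟩, false) with hz0
    set V : ℕ → Ω → Trip N := fun t ω => (A t ω, J t ω, X t ω) with hV
    set pz : Trip N → ℝ≥0∞ := fun z =>
      ENNReal.ofReal ((1 / (N : ℝ)) * (if G.Adj z.1 z.2.1 then 1 / (G.degree z.1 : ℝ) else 0) *
        (if z.2.2 then ε else 1 - ε)) with hpz
    have hlaw' : ∀ t z, P (V t ⁻¹' {z}) = pz z := by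
      rintro t ⟨i, j, e⟩
      have hset : V t ⁻¹' {(i, j, e)} = {ω | (A t ω, J t ω, X t ω) = (i, j, e)} := by
        ext ω; simp [hV]
      rw [hset, hlaw t i j e]
    have hmeasC : ∀ t (z : Trip N), MeasurableSet (V t ⁻¹' {z}) := fun t z =>
      (hmeas t) (measurableSet_singleton z)
    have hprod : ∀ (T : Finset ℕ) (σ : ℕ → Trip N),
        P (⋂ t ∈ T, V t ⁻¹' {σ t}) = ∏ t ∈ T, P (V t ⁻¹' {σ t}) := by
      intro T σ
      exact (ProbabilityTheory.iIndepFun_iff_measure_inter_preimage_eq_mul.mp hindep) T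
        (sets := fun t => {σ t}) (fun i _ => measurableSet_singleton _)
    set blockT : ℕ → Finset ℕ := fun n => (Finset.range L).image (fun k => n * L + k) with hblockT
    set σ : ℕ → Trip N := fun t => s.getD (t % L) z0 with hσ
    set B : ℕ → Set Ω := fun n => ⋂ t ∈ blockT n, V t ⁻¹' {σ t} with hB
    have hBmeas : ∀ n, MeasurableSet (B n) := fun n =>
      Finset.measurableSet_biInter _ (fun t _ => hmeasC t _)
    have hσval : ∀ n k, k < L → σ (n * L + k) = s.getD k z0 := by
      intro n k hk
      simp only [hσ]
      congr 1
      conv_lhs => rw [Nat.add_comm]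
      rw [Nat.add_mul_mod_self_right, Nat.mod_eq_of_lt hk]
    have hBprod : ∀ n, P (B n) = ∏ k ∈ Finset.range L, pz (s.getD k z0) := by
      intro n
      rw [hB]
      rw [hprod (blockT n) σ, hblockT]
      rw [Finset.prod_image (by intro x hx y hy h; dsimp only at h; omega)]
      refine Finset.prod_congr rfl ?_
      intro k hk
      rw [hlaw', hσval n k (Finset.mem_range.mp hk)]
    set ρ : ℝ≥0∞ := ∏ k ∈ Finset.range L, pz (s.getD k z0) with hρ
    have hρpos : ρ ≠ 0 := by
      rw [hρ, Finset.prod_ne_zero_iff]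
      intro k hk
      have hk' : k < s.length := Finset.mem_range.mp hk
      have hmem : s.getD k z0 ∈ s := by
        rw [List.getD_eq_getElem s z0 hk']
        exact List.getElem_mem hk'
      have hadj := hsadj _ hmem
      have hdeg : 0 < G.degree (s.getD k z0).1 :=
        (G.degree_pos_iff_exists_adj _).mpr ⟨_, hadj⟩
      simp only [hpz]
      rw [if_pos hadj]
      refine ne_of_gt (ENNReal.ofReal_pos.mpr ?_)
      have h1 : (0:ℝ) < 1 / (N : ℝ) := by
        have : (0:ℝ) < (N : ℝ) := by exact_mod_cast hN0
        positivity
      have h2 : (0:ℝ) < 1 / (G.degree (s.getD k z0).1 : ℝ) := by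
        have : (0:ℝ) < (G.degree (s.getD k z0).1 : ℝ) := by exact_mod_cast hdeg
        positivity
      have h3 : (0:ℝ) < (if (s.getD k z0).2.2 then ε else 1 - ε) := by
        split <;> linarith
      positivity
    have hdisj : ∀ a b : ℕ, a ≠ b → Disjoint (blockT a) (blockT b) := by
      intro a b hab
      rw [Finset.disjoint_left]
      intro t hta htb
      simp only [hblockT, Finset.mem_image, Finset.mem_range] at hta htb
      obtain ⟨k, hk, rfl⟩ := hta
      obtain ⟨k', hk', heq⟩ := htb
      rcases Nat.lt_or_ge a b with h' | h'
      · have h1 : a * L + L ≤ b * L := by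
          have := Nat.mul_le_mul_right L (show a + 1 ≤ b by omega)
          rwa [Nat.add_mul, Nat.one_mul] at this
        have h2 : b * L ≤ b * L + k' := Nat.le_add_right _ _
        have h3 : a * L + k < a * L + L := Nat.add_lt_add_left hk _
        omega
      · have hba : b < a := by
          rcases Nat.lt_or_ge b a with h'' | h''
          · exact h''
          · exact absurd (Nat.le_antisymm h'' h') hab
        have h1 : b * L + L ≤ a * L := by
          have := Nat.mul_le_mul_right L (show b + 1 ≤ a by omega)
          rwa [Nat.add_mul, Nat.one_mul] at this
        have h3 : b * L + k' < b * L + L := Nat.add_lt_add_left hk' _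
        omega
    have hiIndepB : iIndepSet B P := by
      rw [ProbabilityTheory.iIndepSet_iff_meas_biInter hBmeas]
      intro S
      have hre : (⋂ n ∈ S, B n) = ⋂ t ∈ S.biUnion blockT, V t ⁻¹' {σ t} := by
        rw [hB, Finset.set_biInter_biUnion]
      rw [hre, hprod]
      rw [Finset.prod_biUnion (fun a _ b _ hab => hdisj a b hab)]
      refine Finset.prod_congr rfl fun n _ => ?_
      rw [hB]
      exact (hprod (blockT n) σ).symm
    have htsum : (∑' n, P (B n)) = ∞ := by
      rw [tsum_congr fun n => (hBprod n)]
      exact ENNReal.tsum_const_eq_top_of_ne_zero hρpos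
    have hlimsup := ProbabilityTheory.measure_limsup_eq_one hBmeas hiIndepB htsum
    have hQIcc : ∀ t ω, InIcc (Q t ω) := by
      intro t
      induction t with
      | zero =>
        intro ω
        rw [hQ0]
        intro i o
        exact ⟨(hq0mem i o).1, (hq0mem i o).2⟩
      | succ t ih =>
        intro ω
        rw [hdyn]
        exact step_InIcc hα0 hα1 (ih ω) _ _ _
    have hrun : ∀ (l : List (Trip N)) (t0 : ℕ) (ω : Ω),
        (∀ k, k < l.length → V (t0 + k) ω = l.getD k z0) →
        Q (t0 + l.length) ω = run G α (Q t0 ω) l := by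
      intro l
      induction l with
      | nil => intro t0 ω _; simp [run]
      | cons a l ihl =>
        intro t0 ω htr
        have h0 : V t0 ω = a := by simpa using htr 0 (by simp)
        have hQ1 : Q (t0 + 1) ω = stepT G α (Q t0 ω) a := by
          rw [hdyn t0 ω]
          have h1 : A t0 ω = a.1 := congrArg Prod.fst h0
          have h2 : J t0 ω = a.2.1 := congrArg (fun z => z.2.1) h0
          have h3 : X t0 ω = a.2.2 := congrArg (fun z => z.2.2) h0
          rw [h1, h2, h3]
          rfl
        have hlen : t0 + (a :: l).length = (t0 + 1) + l.length := by
          simp [List.length_cons]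
          omega
        rw [hlen, ihl (t0 + 1) ω ?_, run_cons, hQ1]
        intro k hk
        have := htr (k + 1) (by simpa using Nat.succ_lt_succ hk)
        have harr : t0 + (k + 1) = t0 + 1 + k := by omega
        rw [harr] at this
        simpa using this
    have hcons_persist : ∀ (t0 : ℕ) ω o, Cons o (Q t0 ω) →
        ∀ m : ℕ, Cons o (Q (t0 + m) ω) := by
      intro t0 ω o h m
      induction m with
      | zero => exact h
      | succ m ihm =>
        rw [show t0 + (m + 1) = (t0 + m) + 1 by omega, hdyn]
        exact cons_step hα0 hα1 (hQIcc _ ω) ihm _ _ _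
    have hsub : Filter.limsup B Filter.atTop ⊆
        {ω | ∃ t0 : ℕ, ∃ o : Bool, ∀ t ≥ t0, ∀ i, Q t ω i (!o) < Q t ω i o} := by
      intro ω hω
      have hex : ∃ n, ω ∈ B n := by
        rw [Filter.limsup_eq_iInf_iSup_of_nat] at hω
        simp only [Set.iInf_eq_iInter, Set.mem_iInter, Set.iSup_eq_iUnion, Set.mem_iUnion] at hω
        obtain ⟨i, _, hi⟩ := hω 0
        exact ⟨i, hi⟩
      obtain ⟨n, hn⟩ := hex
      have htr : ∀ k, k < s.length → V (n * L + k) ω = s.getD k z0 := by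
        intro k hk
        rw [hB] at hn
        have hmemT : n * L + k ∈ blockT n := by
          rw [hblockT]
          exact Finset.mem_image.mpr ⟨k, Finset.mem_range.mpr hk, rfl⟩
        have h := Set.mem_iInter₂.mp hn (n * L + k) hmemT
        have h' : V (n * L + k) ω = σ (n * L + k) := h
        rw [h', hσval n k hk]
      have hQrun : Q (n * L + L) ω = run G α (Q (n * L) ω) s :=
        hrun s (n * L) ω htr
      obtain ⟨o, ho⟩ := hsforce (Q (n * L) ω) (hQIcc _ ω)
      refine ⟨n * L + L, o, fun t ht i => ?_⟩
      have hc0 : Cons o (Q (n * L + L) ω) := by rw [hQrun]; exact ho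
      have := hcons_persist (n * L + L) ω o hc0 (t - (n * L + L))
      rw [show n * L + L + (t - (n * L + L)) = t by omega] at this
      exact this i
    have h1 : 1 ≤ P {ω | ∃ t0 : ℕ, ∃ o : Bool, ∀ t ≥ t0, ∀ i, Q t ω i (!o) < Q t ω i o} :=
      hlimsup ▸ measure_mono hsub
    exact le_antisymm prob_le_one h1


end
end

section
/- In the SRLOD model with learning rate α ∈ (0,1) and exploration rate ε ∈ (0,1) on a finite connected graph, consensus is not stable: if there exists a time t0 ∈ ℕ such that q^i_o(t0) > q^i_{-o}(t0) for some opinion o ∈ {-1,1} and every agent i ∈ {1,...,N}, then the probability that q^i_o(t) > q^i_{-o}(t) holds for all agents i and all t ≥ t0 is zero. -/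
open MeasureTheory ProbabilityTheory

noncomputable section

/-- The real value of an opinion: `1` for `true`, `-1` for `false`. -/
def opinVal (b : Bool) : ℝ := if b then 1 else -1

/-- One round of the SRLOD model: the two endpoints `i`, `j` of the selected edge each
express an opinion (the preferred one if the respective exploration flag `e1`, `e2` is
`false`, the other one if it is `true`), and both update the Q-value of their own
expressed opinion by `q ← (1−α)q + α·o_i·o_j`.  (If the sampled pair `(i,j)` is not an
edge of `G` — an event of probability zero — nothing happens.) -/
def srlodStep {N : ℕ} (G : SimpleGraph (Fin N)) [DecidableRel G.Adj] (α : ℝ)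
    (q : Fin N → Bool → ℝ) (i j : Fin N) (e1 e2 : Bool) : Fin N → Bool → ℝ :=
  if G.Adj i j then
    let oi : Bool := if e1 then !(prefOf (q i)) else prefOf (q i)
    let oj : Bool := if e2 then !(prefOf (q j)) else prefOf (q j)
    let R : ℝ := opinVal oi * opinVal oj
    fun v o =>
      if v = i ∧ o = oi then (1 - α) * q i oi + α * R
      else if v = j ∧ o = oj then (1 - α) * q j oj + α * R
      else q v o
  else q

lemma opinVal_mul_not (o : Bool) : opinVal o * opinVal (!o) = -1 := by
  cases o <;> norm_num [opinVal]

lemma opinVal_mul_self (b : Bool) : opinVal b * opinVal b = 1 := by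
  cases b <;> norm_num [opinVal]

lemma opinVal_mul_mem (a b : Bool) :
    -1 ≤ opinVal a * opinVal b ∧ opinVal a * opinVal b ≤ 1 := by
  cases a <;> cases b <;> norm_num [opinVal]

lemma srlodStep_phase1 {N : ℕ} (G : SimpleGraph (Fin N)) [DecidableRel G.Adj] (α : ℝ)
    {i j : Fin N} (hij : G.Adj i j) (q : Fin N → Bool → ℝ) {o : Bool}
    (hpi : prefOf (q i) = o) (hpj : prefOf (q j) = o) :
    srlodStep G α q i j false true i o = (1 - α) * q i o - α := by
  simp [srlodStep, hij, hpi, hpj, opinVal_mul_not]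
  ring

lemma srlodStep_phase2_o {N : ℕ} (G : SimpleGraph (Fin N)) [DecidableRel G.Adj] (α : ℝ)
    {i j : Fin N} (hij : G.Adj i j) (q : Fin N → Bool → ℝ) {o : Bool}
    (hpi : prefOf (q i) = o) (hpj : prefOf (q j) = o) :
    srlodStep G α q i j true true i o = q i o := by
  have hne : i ≠ j := G.ne_of_adj hij
  simp [srlodStep, hij, hpi, hpj, hne]

lemma srlodStep_phase2_no {N : ℕ} (G : SimpleGraph (Fin N)) [DecidableRel G.Adj] (α : ℝ)
    {i j : Fin N} (hij : G.Adj i j) (q : Fin N → Bool → ℝ) {o : Bool}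
    (hpi : prefOf (q i) = o) (hpj : prefOf (q j) = o) :
    srlodStep G α q i j true true i (!o) = (1 - α) * q i (!o) + α := by
  simp [srlodStep, hij, hpi, hpj, opinVal_mul_self]

lemma srlodStep_mem {N : ℕ} (G : SimpleGraph (Fin N)) [DecidableRel G.Adj] {α : ℝ}
    (hα0 : 0 < α) (hα1 : α < 1) {q : Fin N → Bool → ℝ}
    (hq : ∀ v b, q v b ∈ Set.Icc (-1 : ℝ) 1) (i j : Fin N) (e1 e2 : Bool) :
    ∀ v b, srlodStep G α q i j e1 e2 v b ∈ Set.Icc (-1 : ℝ) 1 := by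
  intro v b
  have hmix : ∀ x R : ℝ, -1 ≤ x → x ≤ 1 → -1 ≤ R → R ≤ 1 →
      (1 - α) * x + α * R ∈ Set.Icc (-1 : ℝ) 1 := by
    intro x R h1 h2 h3 h4
    constructor <;> nlinarith
  simp only [srlodStep]
  split_ifs with hadj <;> try exact hq v b
  all_goals {
    beta_reduce
    split_ifs <;>
      first
        | exact hmix _ _ (hq i _).1 (hq i _).2 (opinVal_mul_mem _ _).1 (opinVal_mul_mem _ _).2
        | exact hmix _ _ (hq j _).1 (hq j _).2 (opinVal_mul_mem _ _).1 (opinVal_mul_mem _ _).2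
        | exact hq v b }


/-- In the SRLOD model (at each round an edge of the finite connected graph
`G` is chosen uniformly at random — encoded by an ordered adjacent pair `(I t, J t)`,
each orientation having probability `1/(2|E|)` — and each endpoint explores
independently with probability `ε`; learning rate `α ∈ (0,1)`, exploration rate
`ε ∈ (0,1)`, Q-values start in `[-1,1]`), consensus is not stable: for any time `t0` and
opinion `o`, the probability that `q^i_o(t0) > q^i_{-o}(t0)` for every agent `i` AND
that `q^i_o(t) > q^i_{-o}(t)` for all agents `i` and all `t ≥ t0` is zero. -/
theorem stmt6 {N : ℕ} (hN : 0 < N) (G : SimpleGraph (Fin N)) [DecidableRel G.Adj]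
    (hG : G.Connected) (α ε : ℝ) (hα : α ∈ Set.Ioo (0 : ℝ) 1) (hε : ε ∈ Set.Ioo (0 : ℝ) 1)
    {Ω : Type*} [MeasurableSpace Ω] (P : Measure Ω) [IsProbabilityMeasure P]
    (I J : ℕ → Ω → Fin N) (F1 F2 : ℕ → Ω → Bool)
    (hmeas : ∀ t : ℕ, Measurable (fun ω => (I t ω, J t ω, F1 t ω, F2 t ω)))
    (hindep : iIndepFun
      (fun t ω => (I t ω, J t ω, F1 t ω, F2 t ω)) P)
    (hlaw : ∀ (t : ℕ) (i j : Fin N) (e1 e2 : Bool),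
      P {ω | (I t ω, J t ω, F1 t ω, F2 t ω) = (i, j, e1, e2)} =
        ENNReal.ofReal ((if G.Adj i j then 1 / (2 * (G.edgeFinset.card : ℝ)) else 0) *
          (if e1 then ε else 1 - ε) * (if e2 then ε else 1 - ε)))
    (q : ℕ → Ω → Fin N → Bool → ℝ) (q0 : Fin N → Bool → ℝ)
    (hq0 : ∀ ω, q 0 ω = q0) (hq0mem : ∀ i o, q0 i o ∈ Set.Icc (-1 : ℝ) 1)
    (hdyn : ∀ (t : ℕ) (ω : Ω),
      q (t + 1) ω = srlodStep G α (q t ω) (I t ω) (J t ω) (F1 t ω) (F2 t ω)) :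
    ∀ (t0 : ℕ) (o : Bool),
      P {ω | (∀ i, q t0 ω i (!o) < q t0 ω i o) ∧
          ∀ t ≥ t0, ∀ i, q t ω i (!o) < q t ω i o} = 0 := by
  intro t0 o
  obtain ⟨hα0, hα1⟩ := hα
  obtain ⟨hε0, hε1⟩ := hε
  -- invariant: Q-values stay in [-1,1]
  have hinv : ∀ t (ω : Ω) v b, q t ω v b ∈ Set.Icc (-1 : ℝ) 1 := by
    intro t
    induction t with
    | zero => intro ω v b; rw [hq0]; exact hq0mem v b
    | succ t ih =>
      intro ω v b
      rw [hdyn]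
      exact srlodStep_mem G hα0 hα1 (ih ω) _ _ _ _ v b
  by_cases hE : ∃ p : Fin N × Fin N, G.Adj p.1 p.2
  swap
  · -- no edge: the law is identically zero, contradicting P being a probability measure
    exfalso
    have h0 : ∀ pt : Fin N × Fin N × Bool × Bool,
        P {ω | (I 0 ω, J 0 ω, F1 0 ω, F2 0 ω) = pt} = 0 := by
      rintro ⟨a, b, e1, e2⟩
      rw [hlaw, if_neg (fun h => hE ⟨(a, b), h⟩)]
      simp
    have huniv : (Set.univ : Set Ω) ⊆
        ⋃ pt : Fin N × Fin N × Bool × Bool, {ω | (I 0 ω, J 0 ω, F1 0 ω, F2 0 ω) = pt} :=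
      fun ω _ => Set.mem_iUnion.2 ⟨_, rfl⟩
    have h1 : (1 : ENNReal) ≤ 0 := by
      calc (1 : ENNReal) = P Set.univ := (measure_univ).symm
      _ ≤ P (⋃ pt : Fin N × Fin N × Bool × Bool,
          {ω | (I 0 ω, J 0 ω, F1 0 ω, F2 0 ω) = pt}) := measure_mono huniv
      _ ≤ ∑' pt : Fin N × Fin N × Bool × Bool,
          P {ω | (I 0 ω, J 0 ω, F1 0 ω, F2 0 ω) = pt} := measure_iUnion_le _
      _ = 0 := by simp [h0]
    simp at h1
  obtain ⟨⟨i, j⟩, hij⟩ := hE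
  have hijne : i ≠ j := G.ne_of_adj hij
  have hEpos : 0 < (G.edgeFinset.card : ℝ) := by
    have hmem : s(i, j) ∈ G.edgeFinset := by
      rw [SimpleGraph.mem_edgeFinset]; exact hij
    exact_mod_cast Finset.card_pos.mpr ⟨_, hmem⟩
  obtain ⟨K, hK⟩ : ∃ K : ℕ, (1 - α) ^ K < α :=
    exists_pow_lt_of_lt_one hα0 (by linarith)
  set L : ℕ := K + 1 with hLdef
  set pt1 : Fin N × Fin N × Bool × Bool := (i, j, false, true) with hpt1
  set pt2 : Fin N × Fin N × Bool × Bool := (i, j, true, true) with hpt2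
  set w : ℕ → Fin N × Fin N × Bool × Bool :=
    fun t => if t % L = t0 % L then pt1 else pt2 with hw
  set f : ℕ → Set Ω :=
    fun t => {ω | (I t ω, J t ω, F1 t ω, F2 t ω) = w t} with hf
  set s : ℕ → ℕ := fun n => t0 + n * L with hs
  set D : ℕ → Set Ω := fun n => ⋂ t ∈ Finset.Ico (s n) (s n + L), f t with hD
  set A : ℕ → Set Ω := fun m => ⋂ n ∈ Finset.range m, (D n)ᶜ with hA
  -- the pattern inside a block
  have hmod : ∀ n k, k < L → ((s n + k) % L = t0 % L ↔ k = 0) := by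
    intro n k hk
    have h1 : (s n + k) % L = (t0 + k) % L := by
      simp only [hs]
      rw [show t0 + n * L + k = t0 + k + n * L from by ring, Nat.add_mul_mod_self_right]
    rw [h1]
    constructor
    · intro hcontra
      have h2 : k ≡ 0 [MOD L] := by
        refine Nat.ModEq.add_left_cancel' t0 ?_
        simpa [Nat.ModEq, Nat.add_zero] using hcontra
      have h3 : k % L = 0 % L := h2
      rw [Nat.mod_eq_of_lt hk, Nat.zero_mod] at h3
      exact h3
    · intro h; subst h; rfl
  have hwval : ∀ n k, k < L → (w (s n + k) = if k = 0 then pt1 else pt2) := by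
    intro n k hk
    simp only [hw]
    by_cases h : k = 0
    · rw [if_pos ((hmod n k hk).mpr h), if_pos h]
    · rw [if_neg (fun hc => h ((hmod n k hk).mp hc)), if_neg h]
  -- probability of each elementary event
  set p1 : ℝ := 1 / (2 * (G.edgeFinset.card : ℝ)) * (1 - ε) * ε with hp1def
  set p2 : ℝ := 1 / (2 * (G.edgeFinset.card : ℝ)) * ε * ε with hp2def
  have hp1 : 0 < p1 := by
    rw [hp1def]
    exact mul_pos (mul_pos (by positivity) (by linarith)) hε0
  have hp2 : 0 < p2 := by
    rw [hp2def]; positivity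
  have hPf : ∀ t, P (f t) = if t % L = t0 % L then ENNReal.ofReal p1 else ENNReal.ofReal p2 := by
    intro t
    by_cases h : t % L = t0 % L
    · rw [if_pos h]
      have hft : f t = {ω | (I t ω, J t ω, F1 t ω, F2 t ω) = (i, j, false, true)} := by
        simp only [hf, hw, if_pos h, hpt1]
      rw [hft, hlaw t i j false true, if_pos hij, hp1def]
      norm_num
    · rw [if_neg h]
      have hft : f t = {ω | (I t ω, J t ω, F1 t ω, F2 t ω) = (i, j, true, true)} := by
        simp only [hf, hw, if_neg h, hpt2]
      rw [hft, hlaw t i j true true, if_pos hij, hp2def]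
      norm_num
  -- measurability
  have hfcomap : ∀ t, MeasurableSet[MeasurableSpace.comap
      (fun ω => (I t ω, J t ω, F1 t ω, F2 t ω)) inferInstance] (f t) := by
    intro t
    exact ⟨{w t}, measurableSet_singleton _, rfl⟩
  have hfmeas : ∀ t, MeasurableSet (f t) := fun t => (hmeas t) (measurableSet_singleton (w t))
  have hDmeas : ∀ n, MeasurableSet (D n) := fun n =>
    Finset.measurableSet_biInter _ fun t _ => hfmeas t
  have hAmeas : ∀ m, MeasurableSet (A m) := fun m =>
    Finset.measurableSet_biInter _ fun n _ => (hDmeas n).compl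
  set δ : ENNReal := ENNReal.ofReal p2 ^ K * ENNReal.ofReal p1 with hδdef
  have hPD : ∀ n, P (D n) = δ := by
    intro n
    have hbi : P (D n) = ∏ t ∈ Finset.Ico (s n) (s n + L), P (f t) := by
      simp only [hD]
      exact hindep.meas_biInter (fun t _ => hfcomap t)
    rw [hbi, Finset.prod_Ico_eq_prod_range]
    have hcard : s n + L - s n = L := by omega
    rw [hcard]
    have hterm : ∀ k ∈ Finset.range L, P (f (s n + k)) =
        (if k = 0 then ENNReal.ofReal p1 else ENNReal.ofReal p2) := by
      intro k hk
      rw [Finset.mem_range] at hk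
      rw [hPf (s n + k)]
      by_cases h : k = 0
      · rw [if_pos ((hmod n k hk).mpr h), if_pos h]
      · rw [if_neg (fun hc => h ((hmod n k hk).mp hc)), if_neg h]
    rw [Finset.prod_congr rfl hterm, hLdef, Finset.prod_range_succ']
    simp only [Nat.succ_ne_zero, if_false, eq_self_iff_true, if_true, Finset.prod_const, Finset.card_range]
    rfl

  have hδpos : 0 < δ := by
    rw [hδdef]
    have h1 : 0 < ENNReal.ofReal p1 := ENNReal.ofReal_pos.mpr hp1
    have h2 : 0 < ENNReal.ofReal p2 := ENNReal.ofReal_pos.mpr hp2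
    exact ENNReal.mul_pos (pow_ne_zero _ h2.ne') h1.ne'
  have hδle : δ ≤ 1 := by
    rw [← hPD 0]; exact prob_le_one
  -- independence of the past and block n
  have hblockindep : ∀ m, P (A m ∩ D m) = P (A m) * P (D m) := by
    intro m
    set mt : ℕ → MeasurableSpace Ω :=
      fun t => MeasurableSpace.comap (fun ω => (I t ω, J t ω, F1 t ω, F2 t ω)) inferInstance
      with hmt
    have h_le : ∀ t, mt t ≤ (inferInstance : MeasurableSpace Ω) := fun t => (hmeas t).comap_le
    set S : Set ℕ := {t | t < s m} with hS
    set T : Set ℕ := {t | s m ≤ t} with hT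
    have hST : Disjoint S T := by
      rw [Set.disjoint_left]
      intro a ha
      simp only [hS, Set.mem_setOf_eq] at ha
      simp only [hT, Set.mem_setOf_eq]
      omega
    have hindep2 : Indep (⨆ t ∈ S, mt t) (⨆ t ∈ T, mt t) P :=
      indep_iSup_of_disjoint h_le hindep.iIndep hST
    have hfS : ∀ t ∈ S, MeasurableSet[⨆ t ∈ S, mt t] (f t) := by
      intro t ht
      exact le_iSup₂ (f := fun t (_ : t ∈ S) => mt t) t ht _ (hfcomap t)
    have hfT : ∀ t ∈ T, MeasurableSet[⨆ t ∈ T, mt t] (f t) := by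
      intro t ht
      exact le_iSup₂ (f := fun t (_ : t ∈ T) => mt t) t ht _ (hfcomap t)
    have hDT : MeasurableSet[⨆ t ∈ T, mt t] (D m) := by
      simp only [hD]
      refine Finset.measurableSet_biInter _ fun t ht => ?_
      refine hfT t ?_
      rw [hT]
      exact (Finset.mem_Ico.mp ht).1
    have hAS : MeasurableSet[⨆ t ∈ S, mt t] (A m) := by
      simp only [hA]
      refine Finset.measurableSet_biInter _ fun n hn => ?_
      refine MeasurableSet.compl ?_
      simp only [hD]
      refine Finset.measurableSet_biInter _ fun t ht => ?_
      refine hfS t ?_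
      rw [hS]
      rw [Finset.mem_range] at hn
      rw [Finset.mem_Ico] at ht
      have h1 : s n + L ≤ s m := by
        simp only [hs]
        have : (n + 1) * L ≤ m * L := Nat.mul_le_mul_right L hn
        nlinarith [this]
      exact lt_of_lt_of_le ht.2 h1
    exact ((hindep2.indepSet_of_measurableSet hAS hDT).measure_inter_eq_mul)
  -- the geometric decay
  have hAbound : ∀ m, P (A m) ≤ (1 - δ) ^ m := by
    intro m
    induction m with
    | zero =>
      have : A 0 = Set.univ := by simp [hA]
      rw [this, measure_univ, pow_zero]
    | succ m ih =>
      have hsplit : A (m + 1) = A m ∩ (D m)ᶜ := by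
        simp only [hA, Finset.range_add_one, Finset.set_biInter_insert]
        exact Set.inter_comm _ _
      have hadd : P (A m ∩ D m) + P (A (m + 1)) = P (A m) := by
        have h := measure_inter_add_diff (μ := P) (A m) (hDmeas m)
        rwa [Set.diff_eq, ← hsplit] at h
      have hmul : P (A m ∩ D m) = P (A m) * δ := by
        rw [hblockindep m, hPD m]
      have hc : P (A m) * δ ≠ ⊤ :=
        ENNReal.mul_ne_top (measure_ne_top P _) (hδle.trans_lt ENNReal.one_lt_top).ne
      have h2 : P (A m) * (1 - δ) + P (A m) * δ = P (A m) := by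
        rw [← mul_add, tsub_add_cancel_of_le hδle, mul_one]
      have h1 : P (A (m + 1)) + P (A m) * δ = P (A m) * (1 - δ) + P (A m) * δ := by
        rw [h2, ← hmul, add_comm]
        exact hadd
      have h3 : P (A (m + 1)) = P (A m) * (1 - δ) :=
        WithTop.add_right_cancel hc h1
      calc P (A (m + 1)) = P (A m) * (1 - δ) := h3
      _ ≤ (1 - δ) ^ m * (1 - δ) := mul_le_mul_left ih _
      _ = (1 - δ) ^ (m + 1) := (pow_succ _ _).symm
  -- core deterministic lemma: consensus forever is incompatible with block n's pattern
  have hcore : ∀ (ω : Ω) (n : ℕ),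
      (∀ t ≥ t0, ∀ v, q t ω v (!o) < q t ω v o) → ω ∉ D n := by
    intro ω n hcons hωD
    simp only [hD, Set.mem_iInter] at hωD
    have hsge : t0 ≤ s n := by simp only [hs]; exact Nat.le_add_right _ _
    have hX : ∀ k, k < L → (I (s n + k) ω, J (s n + k) ω, F1 (s n + k) ω, F2 (s n + k) ω)
        = if k = 0 then pt1 else pt2 := by
      intro k hk
      have ht : s n + k ∈ Finset.Ico (s n) (s n + L) :=
        Finset.mem_Ico.mpr ⟨Nat.le_add_right _ _, by omega⟩
      have hmem := hωD (s n + k) ht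
      simp only [hf, Set.mem_setOf_eq] at hmem
      rw [hmem]
      exact hwval n k hk
    have hpref : ∀ t ≥ t0, ∀ v : Fin N, prefOf (q t ω v) = o :=
      fun t ht v => prefOf_eq (hcons t ht v)
    -- phase 1
    have hX0 := hX 0 (by omega)
    rw [if_pos rfl] at hX0
    obtain ⟨hI0, hJ0, hF10, hF20⟩ : I (s n) ω = i ∧ J (s n) ω = j ∧
        F1 (s n) ω = false ∧ F2 (s n) ω = true := by
      simpa [hpt1, Prod.ext_iff] using hX0
    have hstep1 : q (s n + 1) ω i o = (1 - α) * q (s n) ω i o - α := by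
      rw [hdyn (s n) ω, hI0, hJ0, hF10, hF20]
      exact srlodStep_phase1 G α hij _ (hpref _ hsge i) (hpref _ hsge j)
    have h1o : q (s n + 1) ω i o ≤ 1 - 2 * α := by
      have h := (hinv (s n) ω i o).2
      rw [hstep1]; nlinarith
    -- phase 2
    have hphase2 : ∀ k, k ≤ K →
        q (s n + 1 + k) ω i o = q (s n + 1) ω i o ∧
        1 - q (s n + 1 + k) ω i (!o) ≤ (1 - α) ^ k * (1 - q (s n + 1) ω i (!o)) := by
      intro k
      induction k with
      | zero => intro _; exact ⟨rfl, by simp⟩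
      | succ k ih =>
        intro hk1
        obtain ⟨ihA, ihB⟩ := ih (Nat.le_of_succ_le hk1)
        have htt0 : t0 ≤ s n + 1 + k := by omega
        have hXk := hX (k + 1) (by omega)
        rw [if_neg (Nat.succ_ne_zero k)] at hXk
        rw [show s n + (k + 1) = s n + 1 + k from by omega] at hXk
        obtain ⟨hIk, hJk, hF1k, hF2k⟩ : I (s n + 1 + k) ω = i ∧ J (s n + 1 + k) ω = j ∧
            F1 (s n + 1 + k) ω = true ∧ F2 (s n + 1 + k) ω = true := by
          simpa [hpt2, Prod.ext_iff] using hXk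
        have hstep : q (s n + 1 + k + 1) ω =
            srlodStep G α (q (s n + 1 + k) ω) i j true true := by
          rw [hdyn (s n + 1 + k) ω, hIk, hJk, hF1k, hF2k]
        have heqo : q (s n + 1 + k + 1) ω i o = q (s n + 1 + k) ω i o := by
          rw [hstep]
          exact srlodStep_phase2_o G α hij _ (hpref _ htt0 i) (hpref _ htt0 j)
        have heqno : q (s n + 1 + k + 1) ω i (!o)
            = (1 - α) * q (s n + 1 + k) ω i (!o) + α := by
          rw [hstep]
          exact srlodStep_phase2_no G α hij _ (hpref _ htt0 i) (hpref _ htt0 j)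
        have hteq : s n + 1 + (k + 1) = s n + 1 + k + 1 := by omega
        rw [hteq]
        constructor
        · rw [heqo, ihA]
        · rw [heqno]
          have hnn : (0 : ℝ) ≤ 1 - α := by linarith
          calc 1 - ((1 - α) * q (s n + 1 + k) ω i (!o) + α)
              = (1 - α) * (1 - q (s n + 1 + k) ω i (!o)) := by ring
          _ ≤ (1 - α) * ((1 - α) ^ k * (1 - q (s n + 1) ω i (!o))) :=
              mul_le_mul_of_nonneg_left ihB hnn
          _ = (1 - α) ^ (k + 1) * (1 - q (s n + 1) ω i (!o)) := by ring
    obtain ⟨hfo, hfno⟩ := hphase2 K le_rfl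
    have hfin := hcons (s n + 1 + K) (by omega) i
    have hq1no := (hinv (s n + 1) ω i (!o)).1
    have hpow : (0 : ℝ) ≤ (1 - α) ^ K := pow_nonneg (by linarith) K
    have hmul2 : (1 - α) ^ K * (1 - q (s n + 1) ω i (!o)) ≤ (1 - α) ^ K * 2 :=
      mul_le_mul_of_nonneg_left (by linarith) hpow
    have hKK : (1 - α) ^ K * 2 < 2 * α := by nlinarith
    rw [hfo] at * 
    linarith
  -- conclusion
  have hsub : ∀ m, {ω | (∀ i, q t0 ω i (!o) < q t0 ω i o) ∧
      ∀ t ≥ t0, ∀ i, q t ω i (!o) < q t ω i o} ⊆ A m := by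
    intro m ω hω
    rw [hA]
    refine Set.mem_iInter₂.2 fun n _ => hcore ω n hω.2
  have hle : ∀ m, P {ω | (∀ i, q t0 ω i (!o) < q t0 ω i o) ∧
      ∀ t ≥ t0, ∀ i, q t ω i (!o) < q t ω i o} ≤ (1 - δ) ^ m :=
    fun m => (measure_mono (hsub m)).trans (hAbound m)
  have htend : Filter.Tendsto (fun m : ℕ => (1 - δ) ^ m) Filter.atTop (nhds 0) :=
    ENNReal.tendsto_pow_atTop_nhds_zero_of_lt_one
      (ENNReal.sub_lt_self ENNReal.one_ne_top one_ne_zero hδpos.ne')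
  refine le_antisymm ?_ zero_le
  exact ge_of_tendsto htend (Filter.Eventually.of_forall hle)

end
end

section
/- In the SRLOD model with learning rate α ∈ (0,1) and exploration rate ε ∈ (0,1) on a finite connected graph, the time evolution of the preference vector is ergodic: for any two states η, ζ ∈ S = {-1,1}^N and any time t0, there exists a finite k such that P(y_{t0+k} = ζ | y_{t0} = η) > 0. -/
open MeasureTheory ProbabilityTheory

noncomputable section

namespace Stmt7Aux
variable {N : ℕ} (G : SimpleGraph (Fin N)) [DecidableRel G.Adj] (α : ℝ)

def stepM (x : Fin N → Bool → ℝ) (m : Fin N × Fin N × Bool × Bool) : Fin N → Bool → ℝ :=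
  srlodStep G α x m.1 m.2.1 m.2.2.1 m.2.2.2
def instrMove (x : Fin N → Bool → ℝ) (c : Fin N × Fin N × Bool × Bool) :
    Fin N × Fin N × Bool × Bool :=
  (c.1, c.2.1, prefOf (x c.1) != c.2.2.1, prefOf (x c.2.1) != c.2.2.2)
def execI (x : Fin N → Bool → ℝ) (c : Fin N × Fin N × Bool × Bool) : Fin N → Bool → ℝ :=
  stepM G α x (instrMove x c)
def execP (x : Fin N → Bool → ℝ) (l : List (Fin N × Fin N × Bool × Bool)) :
    Fin N → Bool → ℝ :=
  l.foldl (execI G α) x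
def traceP : (Fin N → Bool → ℝ) → List (Fin N × Fin N × Bool × Bool) →
    List (Fin N × Fin N × Bool × Bool)
  | _, [] => []
  | x, c :: l => instrMove x c :: traceP (execI G α x c) l

lemma bexpr (p o : Bool) : (if (p != o) = true then !p else p) = o := by
  cases p <;> cases o <;> rfl

lemma execI_eq {i j : Fin N} (h : G.Adj i j) (x : Fin N → Bool → ℝ) (oi oj : Bool) :
    execI G α x (i, j, oi, oj) = fun v o =>
      if v = i ∧ o = oi then (1 - α) * x i oi + α * (opinVal oi * opinVal oj)
      else if v = j ∧ o = oj then (1 - α) * x j oj + α * (opinVal oi * opinVal oj)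
      else x v o := by
  show stepM G α x (i, j, prefOf (x i) != oi, prefOf (x j) != oj) = _
  simp only [stepM, srlodStep, h, if_true, bexpr]

lemma execP_append (x : Fin N → Bool → ℝ) (l1 l2 : List (Fin N × Fin N × Bool × Bool)) :
    execP G α x (l1 ++ l2) = execP G α (execP G α x l1) l2 :=
  List.foldl_append

lemma opinVal_mul_self (o : Bool) : opinVal o * opinVal o = 1 := by
  cases o <;> norm_num [opinVal]

lemma opinVal_mul_not (o : Bool) : opinVal (!o) * opinVal o = -1 := by
  cases o <;> norm_num [opinVal]

/-- bounds invariant -/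
def Bdd (x : Fin N → Bool → ℝ) : Prop := ∀ v o, -1 ≤ x v o ∧ x v o ≤ 1

lemma opinVal_bdd (o : Bool) : -1 ≤ opinVal o ∧ opinVal o ≤ 1 := by
  cases o <;> norm_num [opinVal]

lemma stepM_bdd (hα0 : 0 < α) (hα1 : α < 1) {x : Fin N → Bool → ℝ} (hx : Bdd x)
    (m : Fin N × Fin N × Bool × Bool) : Bdd (stepM G α x m) := by
  intro v o
  simp only [stepM, srlodStep]
  split
  · set oi : Bool := if m.2.2.1 then !(prefOf (x m.1)) else prefOf (x m.1) with hoi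
    set oj : Bool := if m.2.2.2 then !(prefOf (x m.2.1)) else prefOf (x m.2.1) with hoj
    simp only
    obtain ⟨hR1, hR2⟩ : -1 ≤ opinVal oi * opinVal oj ∧ opinVal oi * opinVal oj ≤ 1 := by
      rcases opinVal_bdd oi with ⟨a1, a2⟩
      rcases opinVal_bdd oj with ⟨b1, b2⟩
      constructor <;> nlinarith
    split_ifs
    · rcases hx m.1 oi with ⟨c1, c2⟩; constructor <;> nlinarith
    · rcases hx m.2.1 oj with ⟨c1, c2⟩; constructor <;> nlinarith
    · exact hx v o
  · exact hx v o

lemma execI_bdd (hα0 : 0 < α) (hα1 : α < 1) {x : Fin N → Bool → ℝ} (hx : Bdd x)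
    (c : Fin N × Fin N × Bool × Bool) : Bdd (execI G α x c) :=
  stepM_bdd G α hα0 hα1 hx _

lemma execP_bdd (hα0 : 0 < α) (hα1 : α < 1)
    (l : List (Fin N × Fin N × Bool × Bool)) : ∀ {x : Fin N → Bool → ℝ}, Bdd x →
    Bdd (execP G α x l) := by
  induction l with
  | nil => intro x hx; exact hx
  | cons c l ih =>
    intro x hx
    exact ih (execI_bdd G α hα0 hα1 hx c)

lemma pu_spec {i j : Fin N} (h : G.Adj i j) (o : Bool) (k : ℕ) :
    ∀ x : Fin N → Bool → ℝ,
    (execP G α x (List.replicate k (i, j, o, o)) i o = 1 - (1-α)^k * (1 - x i o)) ∧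
    (execP G α x (List.replicate k (i, j, o, o)) j o = 1 - (1-α)^k * (1 - x j o)) ∧
    (∀ v o', ¬(v = i ∧ o' = o) → ¬(v = j ∧ o' = o) →
      execP G α x (List.replicate k (i, j, o, o)) v o' = x v o') := by
  induction k with
  | zero => intro x; simp [execP]
  | succ k ih =>
    intro x
    rw [List.replicate_succ]
    have hij : i ≠ j := G.ne_of_adj h
    have e1 : execP G α x ((i,j,o,o) :: List.replicate k (i,j,o,o))
        = execP G α (execI G α x (i,j,o,o)) (List.replicate k (i,j,o,o)) := rfl
    rw [e1]
    obtain ⟨h1, h2, h3⟩ := ih (execI G α x (i,j,o,o))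
    have hi : execI G α x (i,j,o,o) i o = (1-α) * x i o + α := by
      rw [execI_eq G α h]
      simp [opinVal_mul_self]
    have hj : execI G α x (i,j,o,o) j o = (1-α) * x j o + α := by
      rw [execI_eq G α h]
      simp [opinVal_mul_self, hij.symm]
    refine ⟨?_, ?_, ?_⟩
    · rw [h1, hi]; ring
    · rw [h2, hj]; ring
    · intro v o' hv1 hv2
      rw [h3 v o' hv1 hv2, execI_eq G α h]
      simp only
      rw [if_neg hv1, if_neg hv2]

lemma dr_spec {i j : Fin N} (h : G.Adj i j) (o : Bool) (k : ℕ) :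
    ∀ x : Fin N → Bool → ℝ,
    (execP G α x (List.replicate k (i, j, !o, o)) i (!o) = -1 + (1-α)^k * (x i (!o) + 1)) ∧
    (execP G α x (List.replicate k (i, j, !o, o)) j o = -1 + (1-α)^k * (x j o + 1)) ∧
    (∀ v o', ¬(v = i ∧ o' = !o) → ¬(v = j ∧ o' = o) →
      execP G α x (List.replicate k (i, j, !o, o)) v o' = x v o') := by
  induction k with
  | zero => intro x; simp [execP]
  | succ k ih =>
    intro x
    rw [List.replicate_succ]
    have hij : i ≠ j := G.ne_of_adj h
    have e1 : execP G α x ((i,j,!o,o) :: List.replicate k (i,j,!o,o))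
        = execP G α (execI G α x (i,j,!o,o)) (List.replicate k (i,j,!o,o)) := rfl
    rw [e1]
    obtain ⟨h1, h2, h3⟩ := ih (execI G α x (i,j,!o,o))
    have hi : execI G α x (i,j,!o,o) i (!o) = (1-α) * x i (!o) + α * (-1) := by
      rw [execI_eq G α h]
      simp [opinVal_mul_not]
    have hj : execI G α x (i,j,!o,o) j o = (1-α) * x j o + α * (-1) := by
      rw [execI_eq G α h]
      simp [opinVal_mul_not, hij.symm]
    refine ⟨?_, ?_, ?_⟩
    · rw [h1, hi]; ring
    · rw [h2, hj]; ring
    · intro v o' hv1 hv2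
      rw [h3 v o' hv1 hv2, execI_eq G α h]
      simp only
      rw [if_neg hv1, if_neg hv2]

/-- interleaved pump/drain list -/
def ilL (i j : Fin N) (o : Bool) : ℕ → List (Fin N × Fin N × Bool × Bool)
  | 0 => []
  | k+1 => (i, j, o, o) :: (i, j, !o, o) :: ilL i j o k

lemma il_spec (hα0 : 0 < α) (hα1 : α < 1) {i j : Fin N} (h : G.Adj i j) (o : Bool) (k : ℕ) :
    ∀ x : Fin N → Bool → ℝ,
    (execP G α x (ilL i j o k) i o = 1 - (1-α)^k * (1 - x i o)) ∧
    (execP G α x (ilL i j o k) i (!o) = -1 + (1-α)^k * (x i (!o) + 1)) ∧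
    (execP G α x (ilL i j o k) j o ≤ (1-α)^(2*k) * x j o) ∧
    (∀ v o', v ≠ i → ¬(v = j ∧ o' = o) → execP G α x (ilL i j o k) v o' = x v o') := by
  have hβ0 : (0:ℝ) ≤ 1 - α := by linarith
  induction k with
  | zero => intro x; simp [execP, ilL]
  | succ k ih =>
    intro x
    have hij : i ≠ j := G.ne_of_adj h
    have hno : (!o) ≠ o := Bool.not_ne_self o
    set x1 := execI G α x (i,j,o,o) with hx1
    set x2 := execI G α x1 (i,j,!o,o) with hx2
    have e1 : execP G α x (ilL i j o (k+1)) = execP G α x2 (ilL i j o k) := rfl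
    rw [e1]
    obtain ⟨h1, h2, h3, h4⟩ := ih x2
    -- facts about x1
    have hx1io : x1 i o = (1-α) * x i o + α := by
      rw [hx1, execI_eq G α h]; simp [opinVal_mul_self]
    have hx1jo : x1 j o = (1-α) * x j o + α := by
      rw [hx1, execI_eq G α h]; simp [opinVal_mul_self, hij.symm]
    have hx1ino : x1 i (!o) = x i (!o) := by
      rw [hx1, execI_eq G α h]; simp only
      rw [if_neg (by simp [hno]), if_neg (by simp [hij])]
    have hx1other : ∀ v o', v ≠ i → ¬(v = j ∧ o' = o) → x1 v o' = x v o' := by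
      intro v o' hv1 hv2
      rw [hx1, execI_eq G α h]; simp only
      rw [if_neg (by simp [hv1]), if_neg hv2]
    -- facts about x2
    have hx2io : x2 i o = x1 i o := by
      rw [hx2, execI_eq G α h]; simp only
      rw [if_neg (by simp [hno.symm]), if_neg (by simp [hij])]
    have hx2ino : x2 i (!o) = (1-α) * x1 i (!o) + α * (-1) := by
      rw [hx2, execI_eq G α h]; simp [opinVal_mul_not]
    have hx2jo : x2 j o = (1-α) * x1 j o + α * (-1) := by
      rw [hx2, execI_eq G α h]; simp [opinVal_mul_not, hij.symm]
    have hx2other : ∀ v o', v ≠ i → ¬(v = j ∧ o' = o) → x2 v o' = x1 v o' := by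
      intro v o' hv1 hv2
      rw [hx2, execI_eq G α h]; simp only
      rw [if_neg (by simp [hv1]), if_neg hv2]
    refine ⟨?_, ?_, ?_, ?_⟩
    · rw [h1, hx2io, hx1io]; ring
    · rw [h2, hx2ino, hx1ino]; ring
    · calc execP G α x2 (ilL i j o k) j o ≤ (1-α)^(2*k) * x2 j o := h3
        _ ≤ (1-α)^(2*(k+1)) * x j o := by
            rw [hx2jo, hx1jo]
            have hp : (0:ℝ) ≤ (1-α)^(2*k) := pow_nonneg hβ0 _
            have : (1-α) * ((1-α) * x j o + α) + α * (-1)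
                = (1-α)^2 * x j o - α * α := by ring
            rw [this]
            have h2k : (1-α)^(2*(k+1)) = (1-α)^(2*k) * (1-α)^2 := by
              rw [← pow_add]; ring_nf
            rw [h2k]
            nlinarith
    · intro v o' hv1 hv2
      rw [h4 v o' hv1 hv2, hx2other v o' hv1 hv2, hx1other v o' hv1 hv2]

variable (ζ : Fin N → Bool) (n : ℕ)

/-- the gadget setting agent `c` (and re-setting agent `a` if it was set) -/
def gad (c a : Fin N) : List (Fin N × Fin N × Bool × Bool) :=
  if ζ c = ζ a then
    List.replicate n (c, a, !(ζ c), ζ c) ++ List.replicate n (c, a, ζ c, ζ c)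
  else ilL c a (ζ c) n

def isSet (x : Fin N → Bool → ℝ) (v : Fin N) : Prop :=
  1 - 2 * (1-α)^n ≤ x v (ζ v) ∧ x v (!(ζ v)) ≤ (1-α)^n

lemma gad_spec (hα0 : 0 < α) (hα1 : α < 1) {c a : Fin N} (h : G.Adj c a)
    {x : Fin N → Bool → ℝ} (hx : Bdd x) :
    isSet α ζ n (execP G α x (gad ζ n c a)) c ∧
    (isSet α ζ n x a → isSet α ζ n (execP G α x (gad ζ n c a)) a) ∧
    (∀ v, v ≠ c → v ≠ a → ∀ o, execP G α x (gad ζ n c a) v o = x v o) := by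
  have hca : c ≠ a := G.ne_of_adj h
  have hβ0 : (0:ℝ) ≤ 1 - α := by linarith
  have hβ1 : (1-α) ≤ 1 := by linarith
  have hpn0 : (0:ℝ) ≤ (1-α)^n := pow_nonneg hβ0 _
  have hpn1 : (1-α)^n ≤ 1 := pow_le_one₀ hβ0 hβ1
  set o := ζ c with ho
  by_cases hζ : ζ c = ζ a
  · -- equal case: drain then pump
    have hg : gad ζ n c a
        = List.replicate n (c, a, !o, o) ++ List.replicate n (c, a, o, o) := by
      rw [gad, if_pos hζ]
    rw [hg, execP_append]
    set x1 := execP G α x (List.replicate n (c, a, !o, o)) with hx1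
    have hbx1 : Bdd x1 := execP_bdd G α hα0 hα1 _ hx
    obtain ⟨d1, d2, d3⟩ := dr_spec G α h o n x
    obtain ⟨p1, p2, p3⟩ := pu_spec G α h o n x1
    have hno : (!o) ≠ o := Bool.not_ne_self o
    have hcno : execP G α x1 (List.replicate n (c,a,o,o)) c (!o) = x1 c (!o) :=
      p3 c (!o) (by simp [hno]) (by simp [hca])
    have hano : execP G α x1 (List.replicate n (c,a,o,o)) a (!o) = x1 a (!o) :=
      p3 a (!o) (by simp [hca.symm]) (by simp [hno])
    have hx1cno : x1 c (!o) ≤ (1-α)^n := by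
      rw [hx1, d1]
      nlinarith [(hx c (!o)).2]
    have hx1ano : x1 a (!o) = x a (!o) :=
      d3 a (!o) (by simp [hca.symm]) (by simp [hno])
    refine ⟨⟨?_, ?_⟩, fun ⟨s1, s2⟩ => ⟨?_, ?_⟩, ?_⟩
    · rw [← ho, p1]; nlinarith [(hbx1 c o).1]
    · rw [← ho, hcno]; exact hx1cno
    · rw [← hζ, ← ho, p2]; nlinarith [(hbx1 a o).1]
    · rw [← hζ, ← ho, hano, hx1ano]
      rw [← hζ] at s2; exact s2
    · intro v hvc hva o'
      rw [p3 v o' (by simp [hvc]) (by simp [hva]), hx1,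
        d3 v o' (by simp [hvc]) (by simp [hva])]
  · -- unequal case: interleaved
    have hg : gad ζ n c a = ilL c a o n := by rw [gad, if_neg hζ]
    have hζa : ζ a = !o := by
      rw [ho]; revert hζ; cases ζ c <;> cases ζ a <;> simp
    rw [hg]
    obtain ⟨i1, i2, i3, i4⟩ := il_spec G α hα0 hα1 h o n x
    refine ⟨⟨?_, ?_⟩, fun ⟨s1, s2⟩ => ⟨?_, ?_⟩, ?_⟩
    · rw [← ho, i1]; nlinarith [(hx c o).1]
    · rw [← ho, i2]; nlinarith [(hx c (!o)).2]
    · rw [hζa]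
      have : execP G α x (ilL c a o n) a (!o) = x a (!o) :=
        i4 a (!o) hca.symm (by simp [Bool.not_ne_self o])
      rw [this]
      rw [hζa] at s1; exact s1
    · rw [hζa, Bool.not_not]
      calc execP G α x (ilL c a o n) a o ≤ (1-α)^(2*n) * x a o := i3
        _ ≤ (1-α)^n := by
            have h2n : (1-α)^(2*n) = (1-α)^n * (1-α)^n := by
              rw [← pow_add]; ring_nf
            nlinarith [(hx a o).2, (hx a o).1]
    · intro v hvc hva o'
      exact i4 v o' hvc (by simp [hva])

def planW : {u v : Fin N} → G.Walk u v → List (Fin N × Fin N × Bool × Bool)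
  | _, _, SimpleGraph.Walk.nil => []
  | u, _, SimpleGraph.Walk.cons (v := b) _ w => gad ζ n b u ++ planW w

lemma walk_spec (hα0 : 0 < α) (hα1 : α < 1) :
    ∀ {u v : Fin N} (w : G.Walk u v) {x : Fin N → Bool → ℝ}, Bdd x → isSet α ζ n x u →
    (∀ z ∈ w.support, isSet α ζ n (execP G α x (planW G ζ n w)) z) ∧
    (∀ z ∉ w.support, ∀ o, execP G α x (planW G ζ n w) z o = x z o) := by
  intro u v w
  induction w with
  | nil =>
    intro x _ hu
    refine ⟨?_, ?_⟩
    · intro z hz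
      simp only [SimpleGraph.Walk.support_nil, List.mem_singleton] at hz
      subst hz
      exact hu
    · intro z _ o; simp only [planW]; rfl
  | @cons u b v hadj w ih =>
    intro x hx hu
    have hplan : planW G ζ n (SimpleGraph.Walk.cons hadj w)
        = gad ζ n b u ++ planW G ζ n w := by simp only [planW]
    rw [hplan, execP_append]
    set x1 := execP G α x (gad ζ n b u) with hx1
    have hbx1 : Bdd x1 := execP_bdd G α hα0 hα1 _ hx
    obtain ⟨g1, g2, g3⟩ := gad_spec G α ζ n hα0 hα1 hadj.symm hx
    obtain ⟨w1, w2⟩ := ih hbx1 g1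
    constructor
    · intro z hz
      rw [SimpleGraph.Walk.support_cons, List.mem_cons] at hz
      rcases hz with hz | hz
      · subst hz
        by_cases hzw : z ∈ w.support
        · exact w1 z hzw
        · have hval : ∀ o, execP G α x1 (planW G ζ n w) z o = x1 z o := w2 z hzw
          have hset : isSet α ζ n x1 z := g2 hu
          exact ⟨by rw [hval]; exact hset.1, by rw [hval]; exact hset.2⟩
      · exact w1 z hz
    · intro z hz o
      rw [SimpleGraph.Walk.support_cons, List.mem_cons] at hz
      push_neg at hz
      obtain ⟨hzu, hzw⟩ := hz
      have hzb : z ≠ b := by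
        intro hzb; subst hzb
        exact hzw w.start_mem_support
      rw [w2 z hzw o, hx1, g3 z hzb hzu o]

/-- existence of a covering walk from any vertex -/
lemma exists_cover (hG : G.Connected) (r : Fin N) :
    ∃ (v : Fin N) (w : G.Walk r v), ∀ z : Fin N, z ∈ w.support := by
  suffices h : ∀ l : List (Fin N), ∃ (v : Fin N) (w : G.Walk r v), ∀ z ∈ l, z ∈ w.support by
    obtain ⟨v, w, hw⟩ := h (Finset.univ.toList)
    exact ⟨v, w, fun z => hw z (Finset.mem_toList.2 (Finset.mem_univ z))⟩
  intro l
  induction l with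
  | nil => exact ⟨r, SimpleGraph.Walk.nil, by simp⟩
  | cons a l ih =>
    obtain ⟨v, w, hw⟩ := ih
    obtain ⟨p⟩ := hG.preconnected v a
    refine ⟨a, w.append p, ?_⟩
    intro z hz
    rw [SimpleGraph.Walk.mem_support_append_iff]
    rcases List.mem_cons.1 hz with hz | hz
    · subst hz; exact Or.inr p.end_mem_support
    · exact Or.inl (hw z hz)

lemma ilL_mem {i j : Fin N} {o : Bool} : ∀ (k : ℕ) (e : Fin N × Fin N × Bool × Bool),
    e ∈ ilL i j o k → e.1 = i ∧ e.2.1 = j := by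
  intro k
  induction k with
  | zero => intro e he; simp [ilL] at he
  | succ k ih =>
    intro e he
    simp only [ilL, List.mem_cons] at he
    rcases he with he | he | he
    · rw [he]; exact ⟨rfl, rfl⟩
    · rw [he]; exact ⟨rfl, rfl⟩
    · exact ih e he

lemma gad_mem {c a : Fin N} {e : Fin N × Fin N × Bool × Bool}
    (he : e ∈ gad ζ n c a) : e.1 = c ∧ e.2.1 = a := by
  rw [gad] at he
  split_ifs at he
  · rcases List.mem_append.1 he with h | h <;>
    · have h2 := List.eq_of_mem_replicate h
      rw [h2]; exact ⟨rfl, rfl⟩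
  · exact ilL_mem _ _ he

lemma planW_adj : ∀ {u v : Fin N} (w : G.Walk u v) (e : Fin N × Fin N × Bool × Bool),
    e ∈ planW G ζ n w → G.Adj e.1 e.2.1 := by
  intro u v w
  induction w with
  | nil => intro e he; simp [planW] at he
  | @cons u b v hadj w ih =>
    intro e he
    simp only [planW] at he
    rcases List.mem_append.1 he with h | h
    · obtain ⟨h1, h2⟩ := gad_mem ζ n h
      rw [h1, h2]; exact hadj.symm
    · exact ih e h

lemma isSet_pref (hn : (1-α)^n < 1/3) {x : Fin N → Bool → ℝ} {v : Fin N}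
    (h : isSet α ζ n x v) : prefOf (x v) = ζ v := by
  obtain ⟨h1, h2⟩ := h
  have hlt : x v (!(ζ v)) < x v (ζ v) := by
    calc x v (!(ζ v)) ≤ (1-α)^n := h2
      _ < 1 - 2*(1-α)^n := by linarith
      _ ≤ x v (ζ v) := h1
  rw [prefOf]
  cases hζv : ζ v
  · rw [hζv] at hlt
    simp only [Bool.not_false] at hlt
    rw [if_neg (not_le.2 hlt)]
  · rw [hζv] at hlt
    simp only [Bool.not_true] at hlt
    rw [if_pos hlt.le]

lemma traceP_length : ∀ (l : List (Fin N × Fin N × Bool × Bool)) (x : Fin N → Bool → ℝ),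
    (traceP G α x l).length = l.length := by
  intro l
  induction l with
  | nil => intro x; rfl
  | cons c l ih => intro x; simp [traceP, ih]

lemma traceP_fold : ∀ (l : List (Fin N × Fin N × Bool × Bool)) (x : Fin N → Bool → ℝ),
    List.foldl (stepM G α) x (traceP G α x l) = execP G α x l := by
  intro l
  induction l with
  | nil => intro x; rfl
  | cons c l ih =>
    intro x
    simp only [traceP, List.foldl_cons]
    exact ih (execI G α x c)

lemma traceP_mem : ∀ (l : List (Fin N × Fin N × Bool × Bool)) (x : Fin N → Bool → ℝ)
    (m : Fin N × Fin N × Bool × Bool), m ∈ traceP G α x l →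
    ∃ c ∈ l, m.1 = c.1 ∧ m.2.1 = c.2.1 := by
  intro l
  induction l with
  | nil => intro x m hm; simp [traceP] at hm
  | cons c l ih =>
    intro x m hm
    rcases List.mem_cons.1 hm with hm | hm
    · exact ⟨c, List.mem_cons_self, by rw [hm]; exact ⟨rfl, rfl⟩⟩
    · obtain ⟨c', hc', h⟩ := ih (execI G α x c) m hm
      exact ⟨c', List.mem_cons_of_mem _ hc', h⟩

/-- deterministic simulation of the q-dynamics given a move sequence -/
def simF (q0 : Fin N → Bool → ℝ) (f : ℕ → Fin N × Fin N × Bool × Bool) :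
    ℕ → (Fin N → Bool → ℝ)
  | 0 => q0
  | t+1 => stepM G α (simF q0 f t) (f t)

lemma simF_congr (q0 : Fin N → Bool → ℝ) {f g : ℕ → Fin N × Fin N × Bool × Bool} :
    ∀ (t : ℕ), (∀ t' < t, f t' = g t') → simF G α q0 f t = simF G α q0 g t := by
  intro t
  induction t with
  | zero => intro _; rfl
  | succ t ih =>
    intro h
    simp only [simF]
    rw [ih (fun t' ht' => h t' (ht'.trans (Nat.lt_succ_self t))), h t (Nat.lt_succ_self t)]

lemma simF_bdd (hα0 : 0 < α) (hα1 : α < 1) {q0 : Fin N → Bool → ℝ} (hq0 : Bdd q0)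
    (f : ℕ → Fin N × Fin N × Bool × Bool) : ∀ t, Bdd (simF G α q0 f t) := by
  intro t
  induction t with
  | zero => exact hq0
  | succ t ih => exact stepM_bdd G α hα0 hα1 ih (f t)

lemma simF_fold (q0 : Fin N → Bool → ℝ) (f : ℕ → Fin N × Fin N × Bool × Bool)
    (d : Fin N × Fin N × Bool × Bool) (t0 : ℕ) :
    ∀ (l : List (Fin N × Fin N × Bool × Bool)),
    (∀ m < l.length, f (t0 + m) = l.getD m d) →
    simF G α q0 f (t0 + l.length) = List.foldl (stepM G α) (simF G α q0 f t0) l := by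
  intro l
  induction l using List.reverseRecOn with
  | nil => intro _; rfl
  | append_singleton l a ih =>
    intro h
    have hlen : (l ++ [a]).length = l.length + 1 := by simp
    rw [hlen, ← Nat.add_assoc]
    have hstep : simF G α q0 f (t0 + l.length + 1)
        = stepM G α (simF G α q0 f (t0 + l.length)) (f (t0 + l.length)) := rfl
    rw [hstep, ih (fun m hm => by
      rw [h m (by simp; omega), List.getD_append _ _ _ _ hm])]
    have hfa : f (t0 + l.length) = a := by
      have := h l.length (by simp)
      rwa [List.getD_append_right _ _ _ _ (le_refl _), Nat.sub_self, List.getD_cons_zero] at this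
    rw [hfa, List.foldl_append]
    rfl

/-- the full plan works: all preferences equal ζ afterwards -/
lemma plan_spec (hα0 : 0 < α) (hα1 : α < 1) (hn : (1-α)^n < 1/3)
    {i0 j0 : Fin N} (hadj : G.Adj i0 j0) {vend : Fin N} (w : G.Walk i0 vend)
    (hw : ∀ z : Fin N, z ∈ w.support) {x : Fin N → Bool → ℝ} (hx : Bdd x) :
    ∀ z, prefOf (execP G α x (gad ζ n i0 j0 ++ planW G ζ n w) z) = ζ z := by
  intro z
  rw [execP_append]
  set x1 := execP G α x (gad ζ n i0 j0) with hx1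
  have hbx1 : Bdd x1 := execP_bdd G α hα0 hα1 _ hx
  have g1 : isSet α ζ n x1 i0 := (gad_spec G α ζ n hα0 hα1 hadj hx).1
  obtain ⟨w1, _⟩ := walk_spec G α ζ n hα0 hα1 w hbx1 g1
  exact isSet_pref α ζ n hn (w1 z (hw z))

lemma plan_adj {i0 j0 : Fin N} (hadj : G.Adj i0 j0) {vend : Fin N} (w : G.Walk i0 vend) :
    ∀ e ∈ gad ζ n i0 j0 ++ planW G ζ n w, G.Adj e.1 e.2.1 := by
  intro e he
  rcases List.mem_append.1 he with h | h
  · obtain ⟨h1, h2⟩ := gad_mem ζ n h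
    rw [h1, h2]; exact hadj
  · exact planW_adj G ζ n w e h

end Stmt7Aux

/-- In the SRLOD model with learning rate `α ∈ (0,1)` and exploration rate
`ε ∈ (0,1)` on a finite connected graph, the time evolution of the preference vector
`y_t = (i ↦ prefOf (q t · i))` is ergodic: for any two states `η, ζ ∈ {-1,1}^N` and any
time `t0` (such that the conditioning event `y_{t0} = η` is non-null), there exists a
finite `k` with `P(y_{t0+k} = ζ | y_{t0} = η) > 0`. -/
theorem stmt7 {N : ℕ} (hN : 0 < N) (G : SimpleGraph (Fin N)) [DecidableRel G.Adj]
    (hG : G.Connected) (α ε : ℝ) (hα : α ∈ Set.Ioo (0 : ℝ) 1) (hε : ε ∈ Set.Ioo (0 : ℝ) 1)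
    {Ω : Type*} [MeasurableSpace Ω] (P : Measure Ω) [IsProbabilityMeasure P]
    (I J : ℕ → Ω → Fin N) (F1 F2 : ℕ → Ω → Bool)
    (hmeas : ∀ t : ℕ, Measurable (fun ω => (I t ω, J t ω, F1 t ω, F2 t ω)))
    (hindep : iIndepFun
      (fun t ω => (I t ω, J t ω, F1 t ω, F2 t ω)) P)
    (hlaw : ∀ (t : ℕ) (i j : Fin N) (e1 e2 : Bool),
      P {ω | (I t ω, J t ω, F1 t ω, F2 t ω) = (i, j, e1, e2)} =
        ENNReal.ofReal ((if G.Adj i j then 1 / (2 * (G.edgeFinset.card : ℝ)) else 0) *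
          (if e1 then ε else 1 - ε) * (if e2 then ε else 1 - ε)))
    (q : ℕ → Ω → Fin N → Bool → ℝ) (q0 : Fin N → Bool → ℝ)
    (hq0 : ∀ ω, q 0 ω = q0) (hq0mem : ∀ i o, q0 i o ∈ Set.Icc (-1 : ℝ) 1)
    (hdyn : ∀ (t : ℕ) (ω : Ω),
      q (t + 1) ω = srlodStep G α (q t ω) (I t ω) (J t ω) (F1 t ω) (F2 t ω)) :
    ∀ (η ζ : Fin N → Bool) (t0 : ℕ),
      P {ω | (fun i => prefOf (q t0 ω i)) = η} ≠ 0 →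
      ∃ k : ℕ, 0 < ProbabilityTheory.cond P {ω | (fun i => prefOf (q t0 ω i)) = η}
        {ω | (fun i => prefOf (q (t0 + k) ω i)) = ζ} := by
  classical
  intro η ζ t0 hA0
  obtain ⟨hα0, hα1⟩ := hα
  obtain ⟨hε0, hε1⟩ := hε
  set Mvf : ℕ → Ω → Fin N × Fin N × Bool × Bool :=
    fun t ω => (I t ω, J t ω, F1 t ω, F2 t ω) with hMvf
  have hlaw' : ∀ (t : ℕ) (m : Fin N × Fin N × Bool × Bool),
      P (Mvf t ⁻¹' {m}) = ENNReal.ofReal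
        ((if G.Adj m.1 m.2.1 then 1 / (2 * (G.edgeFinset.card : ℝ)) else 0) *
          (if m.2.2.1 then ε else 1 - ε) * (if m.2.2.2 then ε else 1 - ε)) := by
    rintro t ⟨i, j, e1, e2⟩
    exact hlaw t i j e1 e2
  by_cases hE : ∃ p : Fin N × Fin N, G.Adj p.1 p.2
  case neg =>
    exfalso
    push_neg at hE
    have hzero : ∀ m : Fin N × Fin N × Bool × Bool, P (Mvf 0 ⁻¹' {m}) = 0 := by
      intro m
      rw [hlaw' 0 m, if_neg (hE (m.1, m.2.1))]
      simp
    have huniv : (Set.univ : Set Ω) ⊆ ⋃ m : Fin N × Fin N × Bool × Bool, Mvf 0 ⁻¹' {m} :=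
      fun ω _ => Set.mem_iUnion.2 ⟨Mvf 0 ω, rfl⟩
    have hcontra : (1 : ENNReal) ≤ 0 := by
      calc (1 : ENNReal) = P Set.univ := (measure_univ).symm
        _ ≤ ∑' m : Fin N × Fin N × Bool × Bool, P (Mvf 0 ⁻¹' {m}) :=
            (measure_mono huniv).trans (measure_iUnion_le _)
        _ = 0 := by simp [hzero]
    simp at hcontra
  case pos =>
  obtain ⟨⟨i0, j0⟩, hadj⟩ := hE
  have hcard : 0 < (G.edgeFinset.card : ℝ) := by
    have hmem : s(i0, j0) ∈ G.edgeFinset := by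
      rw [SimpleGraph.mem_edgeFinset, SimpleGraph.mem_edgeSet]; exact hadj
    exact_mod_cast Finset.card_pos.2 ⟨_, hmem⟩
  have hpos : ∀ (t : ℕ) (m : Fin N × Fin N × Bool × Bool), G.Adj m.1 m.2.1 →
      P (Mvf t ⁻¹' {m}) ≠ 0 := by
    intro t m hm
    rw [hlaw' t m, if_pos hm]
    refine (ENNReal.ofReal_pos.2 ?_).ne'
    have h1 : (0:ℝ) < 1 / (2 * (G.edgeFinset.card : ℝ)) := by positivity
    have h2 : (0:ℝ) < (if m.2.2.1 then ε else 1 - ε) := by split <;> linarith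
    have h3 : (0:ℝ) < (if m.2.2.2 then ε else 1 - ε) := by split <;> linarith
    positivity
  have hq_eq : ∀ (ω : Ω) (t : ℕ),
      q t ω = Stmt7Aux.simF G α q0 (fun t' => Mvf t' ω) t := by
    intro ω t
    induction t with
    | zero => exact hq0 ω
    | succ t ih => rw [hdyn t ω, ih]; rfl
  have hbddq0 : Stmt7Aux.Bdd q0 := fun v o => ⟨(hq0mem v o).1, (hq0mem v o).2⟩
  set Pf : Ω → (Fin t0 → Fin N × Fin N × Bool × Bool) := fun ω s => Mvf s ω with hPf
  have hPfmeas : Measurable Pf := measurable_pi_lambda _ fun s => hmeas s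
  set dflt : Fin N × Fin N × Bool × Bool := (i0, j0, false, false) with hdflt
  set extg : (Fin t0 → Fin N × Fin N × Bool × Bool) → ℕ → Fin N × Fin N × Bool × Bool :=
    fun gg t => if h : t < t0 then gg ⟨t, h⟩ else dflt with hextg
  have hqt0 : ∀ ω, q t0 ω = Stmt7Aux.simF G α q0 (extg (Pf ω)) t0 := by
    intro ω
    rw [hq_eq ω t0]
    refine Stmt7Aux.simF_congr G α q0 t0 (fun t' ht' => ?_)
    simp only [hextg, hPf]
    rw [dif_pos ht']
  have hAeq : {ω | (fun i => prefOf (q t0 ω i)) = η}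
      = Pf ⁻¹' {gg | (fun i => prefOf (Stmt7Aux.simF G α q0 (extg gg) t0 i)) = η} := by
    ext ω
    simp only [Set.mem_setOf_eq, Set.mem_preimage, hqt0 ω]
  have hAmeas : MeasurableSet {ω | (fun i => prefOf (q t0 ω i)) = η} := by
    rw [hAeq]
    exact hPfmeas (Set.toFinite _).measurableSet
  have hex : ∃ gv : Fin t0 → Fin N × Fin N × Bool × Bool,
      P ({ω | (fun i => prefOf (q t0 ω i)) = η} ∩ Pf ⁻¹' {gv}) ≠ 0 := by
    by_contra hcon
    push_neg at hcon
    apply hA0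
    have hsub : {ω | (fun i => prefOf (q t0 ω i)) = η}
        ⊆ ⋃ gv, ({ω | (fun i => prefOf (q t0 ω i)) = η} ∩ Pf ⁻¹' {gv}) :=
      fun ω hω => Set.mem_iUnion.2 ⟨Pf ω, hω, rfl⟩
    refine le_antisymm ?_ zero_le
    calc P {ω | (fun i => prefOf (q t0 ω i)) = η}
        ≤ ∑' gv, P ({ω | (fun i => prefOf (q t0 ω i)) = η} ∩ Pf ⁻¹' {gv}) :=
          (measure_mono hsub).trans (measure_iUnion_le _)
      _ = 0 := by simp [hcon]
  obtain ⟨gv, hgv⟩ := hex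
  obtain ⟨ω0, hω0⟩ := MeasureTheory.nonempty_of_measure_ne_zero hgv
  have hPfω0 : Pf ω0 = gv := hω0.2
  have hizv : (fun i => prefOf (Stmt7Aux.simF G α q0 (extg gv) t0 i)) = η := by
    have h1 : (fun i => prefOf (q t0 ω0 i)) = η := hω0.1
    rw [hqt0 ω0, hPfω0] at h1
    exact h1
  obtain ⟨n, hn⟩ := exists_pow_lt_of_lt_one (show (0:ℝ) < 1/3 by norm_num)
    (show 1 - α < 1 by linarith)
  obtain ⟨vend, w, hw⟩ := Stmt7Aux.exists_cover G hG i0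
  set xv : Fin N → Bool → ℝ := Stmt7Aux.simF G α q0 (extg gv) t0 with hxv
  have hxvbdd : Stmt7Aux.Bdd xv :=
    Stmt7Aux.simF_bdd G α hα0 hα1 hbddq0 _ t0
  set plan := Stmt7Aux.gad ζ n i0 j0 ++ Stmt7Aux.planW G ζ n w with hplan
  set s := Stmt7Aux.traceP G α xv plan with hs
  have hslen : s.length = plan.length := Stmt7Aux.traceP_length G α plan xv
  refine ⟨plan.length, ?_⟩
  set u : ℕ → Fin N × Fin N × Bool × Bool :=
    fun t => if h : t < t0 then gv ⟨t, h⟩ else s.getD (t - t0) dflt with hu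
  set C := ⋂ t ∈ Finset.range (t0 + plan.length), Mvf t ⁻¹' {u t} with hC
  have hCprod : P C = ∏ t ∈ Finset.range (t0 + plan.length), P (Mvf t ⁻¹' {u t}) :=
    (ProbabilityTheory.iIndepFun_iff_measure_inter_preimage_eq_mul.1 hindep)
      (Finset.range (t0 + plan.length)) (fun t _ => measurableSet_singleton (u t))
  have hfac : ∀ t ∈ Finset.range (t0 + plan.length), P (Mvf t ⁻¹' {u t}) ≠ 0 := by
    intro t ht
    by_cases htl : t < t0
    · have hsub : {ω | (fun i => prefOf (q t0 ω i)) = η} ∩ Pf ⁻¹' {gv}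
          ⊆ Mvf t ⁻¹' {u t} := by
        intro ω hω
        have hg : Pf ω = gv := hω.2
        have h2 : Mvf t ω = gv ⟨t, htl⟩ := by rw [← hg]
        show Mvf t ω = u t
        rw [h2]
        simp only [hu]
        rw [dif_pos htl]
      exact fun h0 => hgv (measure_mono_null hsub h0)
    · push_neg at htl
      have htk : t - t0 < s.length := by
        rw [hslen]
        have := Finset.mem_range.1 ht
        omega
      have humem : u t = s.getD (t - t0) dflt := by
        simp only [hu]; exact dif_neg (by omega)
      have hmem : u t ∈ s := by
        rw [humem, List.getD_eq_getElem _ _ htk]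
        exact List.getElem_mem _
      rw [hs] at hmem
      obtain ⟨c, hc, h1, h2⟩ := Stmt7Aux.traceP_mem G α plan xv (u t) hmem
      refine hpos t (u t) ?_
      rw [h1, h2]
      exact Stmt7Aux.plan_adj G ζ n hadj w c hc
  have hCne : P C ≠ 0 := by
    rw [hCprod]
    exact Finset.prod_ne_zero_iff.2 hfac
  have hCmem : ∀ ω ∈ C, ∀ t < t0 + plan.length, Mvf t ω = u t := by
    intro ω hω t ht
    rw [hC] at hω
    exact Set.mem_iInter₂.1 hω t (Finset.mem_range.2 ht)
  have hCA : C ⊆ {ω | (fun i => prefOf (q t0 ω i)) = η} := by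
    intro ω hω
    have hPfg : Pf ω = gv := by
      funext t'
      have h2 := hCmem ω hω t' (lt_of_lt_of_le t'.2 (Nat.le_add_right _ _))
      have h3 : Pf ω t' = Mvf t' ω := rfl
      rw [h3, h2]
      simp only [hu]
      rw [dif_pos t'.2]
    show (fun i => prefOf (q t0 ω i)) = η
    rw [hqt0 ω, hPfg]
    exact hizv
  have hCB : C ⊆ {ω | (fun i => prefOf (q (t0 + plan.length) ω i)) = ζ} := by
    intro ω hω
    have h1 : q (t0 + plan.length) ω = Stmt7Aux.simF G α q0 u (t0 + plan.length) := by
      rw [hq_eq ω (t0 + plan.length)]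
      exact Stmt7Aux.simF_congr G α q0 (t0 + plan.length) (fun t' ht' => hCmem ω hω t' ht')
    have h2 : Stmt7Aux.simF G α q0 u t0 = xv := by
      rw [hxv]
      refine Stmt7Aux.simF_congr G α q0 t0 (fun t' ht' => ?_)
      simp only [hu, hextg]
      rw [dif_pos ht', dif_pos ht']
    have hfold := Stmt7Aux.simF_fold G α q0 u dflt t0 s (fun m hm => by
      simp only [hu]
      rw [dif_neg (show ¬ t0 + m < t0 by omega)]
      congr 1
      omega)
    have h3 : Stmt7Aux.simF G α q0 u (t0 + plan.length) = Stmt7Aux.execP G α xv plan := by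
      rw [← hslen, hfold, h2, hs]
      exact Stmt7Aux.traceP_fold G α plan xv
    show (fun i => prefOf (q (t0 + plan.length) ω i)) = ζ
    funext i
    rw [h1, h3]
    exact Stmt7Aux.plan_spec G α ζ n hα0 hα1 hn hadj w hw hxvbdd i
  rw [ProbabilityTheory.cond_apply hAmeas]
  have h1 : (P {ω | (fun i => prefOf (q t0 ω i)) = η})⁻¹ ≠ 0 :=
    ENNReal.inv_ne_zero.2 (measure_ne_top P _)
  have h2 : P ({ω | (fun i => prefOf (q t0 ω i)) = η}
      ∩ {ω | (fun i => prefOf (q (t0 + plan.length) ω i)) = ζ}) ≠ 0 :=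
    fun h0 => hCne (measure_mono_null (Set.subset_inter hCA hCB) h0)
  exact ENNReal.mul_pos h1 h2


end
end
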